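/- arXiv:0811.0192 — 8 statements merged into one kernel-verified Lean document; each statement's English description precedes it below -/
import Mathlib

section
/- Let Γ be a subgroup of Homeo₊(S¹). If Γ has a finite orbit, then the image ρ(Γ) of Γ under the rotation number function is a finite subset of ℝ/ℤ. -/
open Filter Topology Set MeasureTheory Classical

noncomputable section

/-- The circle `S¹ = ℝ/ℤ`. -/
abbrev S1 := AddCircle (1 : ℝ)

/-- The group of homeomorphisms of the circle (composition as multiplication). -/
instance : Group (S1 ≃ₜ S1) where
  mul f g := g.trans f
  one := Homeomorph.refl _
  inv := Homeomorph.symm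
  mul_assoc f g h := rfl
  one_mul f := Homeomorph.ext fun _ => rfl
  mul_one f := Homeomorph.ext fun _ => rfl
  inv_mul_cancel f := Homeomorph.ext fun x => f.symm_apply_apply x

/-- `F` is a lift of the circle map `f` to the real line. -/
def IsLiftOf (F : CircleDeg1Lift) (f : S1 ≃ₜ S1) : Prop :=
  ∀ x : ℝ, f (x : S1) = ((F x : ℝ) : S1)

/-- `f` is an orientation-preserving homeomorphism of the circle: it admits a lift to
a monotone homeomorphism of `ℝ` commuting with integer translations. -/
def OrientationPreserving (f : S1 ≃ₜ S1) : Prop :=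
  ∃ F : CircleDeg1Liftˣ, IsLiftOf (F : CircleDeg1Lift) f

/-- The rotation number `ρ(f) ∈ ℝ/ℤ` of an orientation-preserving circle homeomorphism:
the translation number of a lift, taken modulo `ℤ` (independent of the lift). -/
def rotationNumber (f : S1 ≃ₜ S1) : AddCircle (1 : ℝ) :=
  if h : ∃ F : CircleDeg1Liftˣ, IsLiftOf (F : CircleDeg1Lift) f then
    (((h.choose : CircleDeg1Lift).translationNumber : ℝ) : AddCircle (1 : ℝ))
  else 0

/-- The orbit of `x` under a subgroup `Γ` of circle homeomorphisms. -/
def circleOrbit (Γ : Subgroup (S1 ≃ₜ S1)) (x : S1) : Set S1 :=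
  {y : S1 | ∃ γ ∈ Γ, γ x = y}

/-- `Γ` has a finite orbit. -/
def HasFiniteOrbit (Γ : Subgroup (S1 ≃ₜ S1)) : Prop :=
  ∃ x : S1, (circleOrbit Γ x).Finite

/-- `f` is an orientation-preserving real analytic diffeomorphism of the circle: it has a
lift which is a real analytic map `ℝ → ℝ` with everywhere positive derivative. -/
def IsAnalyticDiffeo (f : S1 ≃ₜ S1) : Prop :=
  ∃ F : CircleDeg1Liftˣ, IsLiftOf (F : CircleDeg1Lift) f ∧
    AnalyticOnNhd ℝ (⇑(F : CircleDeg1Lift)) Set.univ ∧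
    ∀ x : ℝ, 0 < deriv (⇑(F : CircleDeg1Lift)) x

/-- `Γ` is nondiscrete with respect to the `C¹`-topology: there is a sequence of elements of
`Γ ∖ {id}` converging to the identity in the `C¹`-topology (expressed via lifts). -/
def C1Nondiscrete (Γ : Subgroup (S1 ≃ₜ S1)) : Prop :=
  ∃ (f : ℕ → S1 ≃ₜ S1) (F : ℕ → CircleDeg1Liftˣ),
    (∀ n, f n ∈ Γ ∧ f n ≠ 1 ∧ IsLiftOf (F n : CircleDeg1Lift) (f n)) ∧
    ∀ ε : ℝ, 0 < ε → ∃ N : ℕ, ∀ n ≥ N, ∀ x : ℝ,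
      |(F n : CircleDeg1Lift) x - x| < ε ∧ |deriv (⇑(F n : CircleDeg1Lift)) x - 1| < ε

/-- `Γ` is locally nondiscrete with respect to the `C¹`-topology: some sequence of elements of
`Γ ∖ {id}` converges to the identity in the `C¹`-topology on some open interval of the circle
(an interval is described by a lift chart `]a, b[` with `b ≤ a + 1`). -/
def LocallyC1Nondiscrete (Γ : Subgroup (S1 ≃ₜ S1)) : Prop :=
  ∃ a b : ℝ, a < b ∧ b ≤ a + 1 ∧
    ∃ (f : ℕ → S1 ≃ₜ S1) (F : ℕ → CircleDeg1Liftˣ),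
      (∀ n, f n ∈ Γ ∧ f n ≠ 1 ∧ IsLiftOf (F n : CircleDeg1Lift) (f n)) ∧
      ∀ ε : ℝ, 0 < ε → ∃ N : ℕ, ∀ n ≥ N, ∀ x ∈ Ioo a b,
        |(F n : CircleDeg1Lift) x - x| < ε ∧ |deriv (⇑(F n : CircleDeg1Lift)) x - 1| < ε

/-- `Γ` is locally nondiscrete with respect to the `C⁰`-topology. -/
def LocallyC0Nondiscrete (Γ : Subgroup (S1 ≃ₜ S1)) : Prop :=
  ∃ a b : ℝ, a < b ∧ b ≤ a + 1 ∧
    ∃ (f : ℕ → S1 ≃ₜ S1) (F : ℕ → CircleDeg1Liftˣ),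
      (∀ n, f n ∈ Γ ∧ f n ≠ 1 ∧ IsLiftOf (F n : CircleDeg1Lift) (f n)) ∧
      ∀ ε : ℝ, 0 < ε → ∃ N : ℕ, ∀ n ≥ N, ∀ x ∈ Ioo a b,
        |(F n : CircleDeg1Lift) x - x| < ε

/-- There is a `Γ`-invariant Borel probability measure on the circle. -/
def HasInvariantProbMeasure (Γ : Subgroup (S1 ≃ₜ S1)) : Prop :=
  ∃ μ : Measure S1, IsProbabilityMeasure μ ∧ ∀ γ ∈ Γ, Measure.map (⇑γ) μ = μ

/-- `Γ` is minimal: every orbit is dense in the circle. -/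
def IsMinimalSubgroup (Γ : Subgroup (S1 ≃ₜ S1)) : Prop :=
  ∀ x : S1, Dense (circleOrbit Γ x)

/-- The closed arc `π([a, b])` of the circle. -/
def closedArc (a b : ℝ) : Set S1 :=
  (fun x : ℝ => (x : S1)) '' Icc a b

/-- The closed arc `π([a,b])` is `Γ`-contractible: some sequence `gₙ ∈ Γ` shrinks its
length to zero (lengths are measured via orientation-preserving lifts). -/
def ContractibleArc (Γ : Subgroup (S1 ≃ₜ S1)) (a b : ℝ) : Prop :=
  ∃ (g : ℕ → S1 ≃ₜ S1) (G : ℕ → CircleDeg1Liftˣ),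
    (∀ n, g n ∈ Γ ∧ IsLiftOf (G n : CircleDeg1Lift) (g n)) ∧
    Tendsto (fun n => (G n : CircleDeg1Lift) b - (G n : CircleDeg1Lift) a) atTop (𝓝 0)

/-- `Φ` is a local flow of the vector field `X` on the set `K` for times `0 ≤ t ≤ t₀`,
staying inside the domain `dom` of `X`. -/
def IsLocalFlowOn (X : ℝ → ℝ) (dom : Set ℝ) (Φ : ℝ → ℝ → ℝ) (K : Set ℝ) (t₀ : ℝ) : Prop :=
  (∀ x ∈ K, Φ 0 x = x) ∧
  ∀ x ∈ K, ∀ t ∈ Icc (0 : ℝ) t₀, Φ t x ∈ dom ∧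
    HasDerivWithinAt (fun s => Φ s x) (X (Φ t x)) (Icc (0 : ℝ) t₀) t

/-- The local vector field `X` on the open interval `]a,b[` (in a lift chart of the circle)
is in the `C⁰`-closure of `Γ` relative to this interval: every time-`t₀` map of its local flow
defined on a compact subinterval is a uniform limit of (lifts of) elements of `Γ`. -/
def InC0Closure (Γ : Subgroup (S1 ≃ₜ S1)) (a b : ℝ) (X : ℝ → ℝ) : Prop :=
  ∀ c d : ℝ, a < c → c ≤ d → d < b →
    ∀ t₀ : ℝ, 0 < t₀ → ∀ Φ : ℝ → ℝ → ℝ,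
      IsLocalFlowOn X (Ioo a b) Φ (Icc c d) t₀ →
      ∃ (γ : ℕ → S1 ≃ₜ S1) (G : ℕ → CircleDeg1Liftˣ),
        (∀ n, γ n ∈ Γ ∧ IsLiftOf (G n : CircleDeg1Lift) (γ n)) ∧
        TendstoUniformlyOn (fun n x => (G n : CircleDeg1Lift) x) (fun x => Φ t₀ x)
          atTop (Icc c d)



/-- Auxiliary: lifts compose. -/
lemma isLiftOf_mul_aux {F G : CircleDeg1Lift} {f g : S1 ≃ₜ S1}
    (hF : IsLiftOf F f) (hG : IsLiftOf G g) : IsLiftOf (F * G) (f * g) := by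
  intro x
  show f (g (x : S1)) = _
  rw [hG x, hF (G x), CircleDeg1Lift.mul_apply]

/-- Auxiliary: lifts of powers. -/
lemma isLiftOf_pow_aux {F : CircleDeg1Lift} {f : S1 ≃ₜ S1} (h : IsLiftOf F f) :
    ∀ n : ℕ, IsLiftOf (F ^ n) (f ^ n)
  | 0 => by
      intro x
      rw [pow_zero, pow_zero]
      show (x : S1) = (((1 : CircleDeg1Lift) x : ℝ) : S1)
      simp
  | n + 1 => by
      rw [pow_succ, pow_succ]
      exact isLiftOf_mul_aux (isLiftOf_pow_aux h n) h

/-- Auxiliary: torsion points of the circle form a finite set. -/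
lemma torsion_finite_aux (N : ℕ) (hN : 0 < N) :
    {y : AddCircle (1 : ℝ) | N • y = 0}.Finite := by
  have h : {y : AddCircle (1:ℝ) | N • y = 0} ⊆
      ⋃ d ∈ N.divisors, {u : AddCircle (1:ℝ) | addOrderOf u = d} := by
    intro y hy
    have hd : addOrderOf y ∣ N := addOrderOf_dvd_of_nsmul_eq_zero hy
    exact Set.mem_biUnion (Nat.mem_divisors.mpr ⟨hd, hN.ne'⟩) rfl
  exact Set.Finite.subset (Set.Finite.biUnion (N.divisors.finite_toSet)
    fun d hd => AddCircle.finite_setOfPred_addOrderOf_eq (1:ℝ)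
      (Nat.pos_of_mem_divisors hd)) h

/-- Auxiliary: an element with a finite orbit has a periodic point with uniform period. -/
lemma periodic_point_aux (Γ : Subgroup (S1 ≃ₜ S1)) (x : S1)
    (hfin : (circleOrbit Γ x).Finite) {γ : S1 ≃ₜ S1} (hγ : γ ∈ Γ) :
    ∃ N : ℕ, 0 < N ∧
      N = Nat.card (Equiv.Perm (circleOrbit Γ x)) ∧ (γ ^ N) x = x := by
  haveI : Finite (circleOrbit Γ x) := hfin.to_subtype
  have hmem : ∀ y ∈ circleOrbit Γ x, γ y ∈ circleOrbit Γ x := by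
    rintro y ⟨g, hg, rfl⟩
    exact ⟨γ * g, Γ.mul_mem hγ hg, rfl⟩
  set S := circleOrbit Γ x with hS
  have hx : x ∈ S := ⟨1, Γ.one_mem, rfl⟩
  let φ : S → S := fun y => ⟨γ y, hmem y y.2⟩
  have hinj : Function.Injective φ := by
    intro a b hab
    exact Subtype.ext (γ.injective (congrArg Subtype.val hab))
  let e : Equiv.Perm S := Equiv.ofBijective φ ((Finite.injective_iff_bijective).mp hinj)
  have key : ∀ (n : ℕ) (y : S), ((e ^ n) y : S1) = (γ ^ n) (y : S1) := by
    intro n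
    induction n with
    | zero => intro y; simp
    | succ n ih =>
        intro y
        rw [pow_succ, pow_succ, Equiv.Perm.mul_apply]
        have : ((γ ^ n * γ) (y : S1)) = (γ ^ n) (γ (y : S1)) := rfl
        rw [this, ← ih ⟨γ y, hmem y y.2⟩]
        rfl
  refine ⟨Nat.card (Equiv.Perm S), Nat.card_pos, rfl, ?_⟩
  have he : e ^ Nat.card (Equiv.Perm S) = 1 := pow_card_eq_one'
  have := key (Nat.card (Equiv.Perm S)) ⟨x, hx⟩
  rw [he] at this
  exact this.symm

/-- Auxiliary: rotation number of an element with a periodic point is torsion. -/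
lemma torsion_of_periodic_aux {γ : S1 ≃ₜ S1} (h : OrientationPreserving γ)
    {x : S1} {N : ℕ} (hN : 0 < N) (hper : (γ ^ N) x = x) :
    N • rotationNumber γ = 0 := by
  have h' : ∃ F : CircleDeg1Liftˣ, IsLiftOf (F : CircleDeg1Lift) γ := h
  rw [rotationNumber, dif_pos h']
  set F : CircleDeg1Liftˣ := h'.choose with hF
  have hlift : IsLiftOf (F : CircleDeg1Lift) γ := h'.choose_spec
  obtain ⟨r, hr⟩ : ∃ r : ℝ, (r : S1) = x := Quotient.exists_rep x
  have hliftN : IsLiftOf ((F : CircleDeg1Lift) ^ N) (γ ^ N) := isLiftOf_pow_aux hlift N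
  have h1 : ((((F : CircleDeg1Lift) ^ N) r : ℝ) : S1) = (r : S1) := by
    rw [← hliftN r, hr, hper, ← hr]
  obtain ⟨m, hm⟩ : ∃ m : ℤ, m • (1:ℝ) = ((F : CircleDeg1Lift) ^ N) r - r := by
    have := (QuotientAddGroup.eq_iff_sub_mem).mp h1
    exact AddSubgroup.mem_zmultiples_iff.mp this
  have hcont : Continuous ⇑(F : CircleDeg1Lift) := by
    have := (CircleDeg1Lift.toOrderIso F).continuous
    rwa [CircleDeg1Lift.coe_toOrderIso] at this
  have hτ : (F : CircleDeg1Lift).translationNumber = (m : ℝ) / (N : ℝ) := by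
    rw [CircleDeg1Lift.translationNumber_eq_rat_iff _ hcont hN]
    refine ⟨r, ?_⟩
    simp only [zsmul_eq_mul, mul_one] at hm
    linarith
  rw [hτ]
  have hNne : (N : ℝ) ≠ 0 := Nat.cast_ne_zero.mpr hN.ne'
  have : (N : ℕ) • (((m : ℝ) / (N : ℝ) : ℝ) : AddCircle (1:ℝ))
      = (((N : ℝ) * ((m : ℝ) / (N : ℝ)) : ℝ) : AddCircle (1:ℝ)) := by
    push_cast [← AddCircle.coe_nsmul]
    norm_num [nsmul_eq_mul]
  rw [this, mul_div_cancel₀ _ hNne]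
  rw [AddCircle.coe_eq_zero_iff]
  exact ⟨m, by simp⟩

/-- If a subgroup of `Homeo₊(S¹)` has a finite orbit, then its image under
the rotation number function is finite. -/
theorem finite_orbit_implies_finite_rotation_image
    (Γ : Subgroup (S1 ≃ₜ S1)) (hΓ : ∀ f ∈ Γ, OrientationPreserving f)
    (horb : HasFiniteOrbit Γ) :
    (rotationNumber '' (Γ : Set (S1 ≃ₜ S1))).Finite := by
  obtain ⟨x, hfin⟩ := horb
  haveI : Finite (circleOrbit Γ x) := hfin.to_subtype
  set N := Nat.card (Equiv.Perm (circleOrbit Γ x)) with hNdef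
  have hN : 0 < N := Nat.card_pos
  refine Set.Finite.subset (torsion_finite_aux N hN) ?_
  rintro ρ ⟨γ, hγ, rfl⟩
  obtain ⟨N', hN', hNeq, hper⟩ := periodic_point_aux Γ x hfin hγ
  have : N' = N := hNeq
  subst this
  exact torsion_of_periodic_aux (hΓ γ hγ) hN' hper

end
end

section
/- Let Γ be a subgroup of Homeo₊(S¹) and assume that there exists a Γ-invariant Borel probability measure on the circle. Then Γ has a finite image under the rotation number function if and only if Γ has a finite orbit. -/
open Filter Topology Set MeasureTheory Classical

noncomputable section

lemma real_fact_zero_lt_one : Fact ((0 : ℝ) < 1) := ⟨one_pos⟩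

attribute [local instance] real_fact_zero_lt_one

namespace RotAux

open CircleDeg1Lift

lemma homeo_mul_apply (f g : S1 ≃ₜ S1) (x : S1) : (f * g) x = f (g x) := rfl

lemma homeo_inv_eq (f : S1 ≃ₜ S1) : (f⁻¹ : S1 ≃ₜ S1) = f.symm := rfl

lemma homeo_one_apply (x : S1) : (1 : S1 ≃ₜ S1) x = x := rfl

lemma isLiftOf_mul {F G : CircleDeg1Liftˣ} {f g : S1 ≃ₜ S1}
    (hF : IsLiftOf (F : CircleDeg1Lift) f) (hG : IsLiftOf (G : CircleDeg1Lift) g) :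
    IsLiftOf ((F * G : CircleDeg1Liftˣ) : CircleDeg1Lift) (f * g) := by
  intro x
  rw [homeo_mul_apply, hG x, hF ((G : CircleDeg1Lift) x)]
  simp [CircleDeg1Lift.mul_apply]

lemma isLiftOf_one : IsLiftOf ((1 : CircleDeg1Liftˣ) : CircleDeg1Lift) (1 : S1 ≃ₜ S1) := by
  intro x; simp [homeo_one_apply]

lemma isLiftOf_pow {F : CircleDeg1Liftˣ} {f : S1 ≃ₜ S1}
    (hF : IsLiftOf (F : CircleDeg1Lift) f) (n : ℕ) :
    IsLiftOf ((F ^ n : CircleDeg1Liftˣ) : CircleDeg1Lift) (f ^ n) := by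
  induction n with
  | zero => simpa using isLiftOf_one
  | succ n ih =>
      have := isLiftOf_mul ih hF
      simpa [pow_succ] using this

lemma isLiftOf_inv {F : CircleDeg1Liftˣ} {f : S1 ≃ₜ S1}
    (hF : IsLiftOf (F : CircleDeg1Lift) f) :
    IsLiftOf ((F⁻¹ : CircleDeg1Liftˣ) : CircleDeg1Lift) f⁻¹ := by
  intro x
  apply f.injective
  rw [← homeo_mul_apply, mul_inv_cancel, homeo_one_apply, hF]
  exact congrArg _ (by simp [CircleDeg1Lift.units_apply_inv_apply]) |>.symm

lemma unit_continuous (F : CircleDeg1Liftˣ) : Continuous (F : CircleDeg1Lift) := by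
  rw [← CircleDeg1Lift.coe_toOrderIso]
  exact (CircleDeg1Lift.toOrderIso F).continuous

lemma unit_strictMono (F : CircleDeg1Liftˣ) : StrictMono (F : CircleDeg1Lift) := by
  rw [← CircleDeg1Lift.coe_toOrderIso]
  exact (CircleDeg1Lift.toOrderIso F).strictMono

lemma coe_S1_eq_iff (x y : ℝ) : (x : S1) = (y : S1) ↔ ∃ m : ℤ, y = x + m := by
  rw [QuotientAddGroup.eq_iff_sub_mem, AddSubgroup.mem_zmultiples_iff]
  constructor
  · rintro ⟨m, hm⟩
    have : (m : ℝ) = x - y := by simpa [zsmul_eq_mul] using hm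
    exact ⟨-m, by push_cast; linarith⟩
  · rintro ⟨m, hm⟩
    exact ⟨-m, by simp [zsmul_eq_mul]; push_cast; linarith⟩

lemma coe_S1_int (m : ℤ) : ((m : ℝ) : S1) = 0 := by
  rw [show (0 : S1) = ((0 : ℝ) : S1) by norm_cast, coe_S1_eq_iff]
  exact ⟨-m, by push_cast; ring⟩

/-- Two lifts of the same homeomorphism differ by an integer translation. -/
lemma lift_sub_lift {F G : CircleDeg1Liftˣ} {f : S1 ≃ₜ S1}
    (hF : IsLiftOf (F : CircleDeg1Lift) f) (hG : IsLiftOf (G : CircleDeg1Lift) f) :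
    ∃ m : ℤ, ∀ x : ℝ, (G : CircleDeg1Lift) x = (F : CircleDeg1Lift) x + m := by
  have key : ∀ x : ℝ, ∃ m : ℤ, (G : CircleDeg1Lift) x = (F : CircleDeg1Lift) x + m := by
    intro x
    have := (hF x).symm.trans (hG x)
    rwa [coe_S1_eq_iff] at this
  obtain ⟨m, hm⟩ := key 0
  refine ⟨m, fun x => ?_⟩
  obtain ⟨k, hk⟩ := key x
  rcases eq_or_ne k m with rfl | hkm
  · exact hk
  exfalso
  set d : ℝ → ℝ := fun y => (G : CircleDeg1Lift) y - (F : CircleDeg1Lift) y with hd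
  have hdc : Continuous d := (unit_continuous G).sub (unit_continuous F)
  have hd0 : d 0 = m := by simp [hd, hm]
  have hdx : d x = k := by simp [hd, hk]
  have hiv := intermediate_value_uIcc (f := d) (a := (0:ℝ)) (b := x) hdc.continuousOn
  rcases hkm.lt_or_gt with h | h
  · have hk' : (k : ℝ) ≤ (m : ℝ) - 1 := by exact_mod_cast Int.le_sub_one_of_lt h
    have hmem : (m : ℝ) - 1/2 ∈ Set.uIcc (d 0) (d x) := by
      rw [hd0, hdx, Set.mem_uIcc]; right; constructor <;> linarith
    obtain ⟨y, -, hy⟩ := hiv hmem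
    obtain ⟨j, hj⟩ := key y
    have hdy : d y = j := by simp [hd, hj]
    have : (2 * j : ℤ) = 2 * m - 1 := by
      exact_mod_cast (by rw [hdy] at hy; linarith : (2 * j : ℝ) = 2 * m - 1)
    omega
  · have hk' : (m : ℝ) ≤ (k : ℝ) - 1 := by exact_mod_cast Int.le_sub_one_of_lt h
    have hmem : (k : ℝ) - 1/2 ∈ Set.uIcc (d 0) (d x) := by
      rw [hd0, hdx, Set.mem_uIcc]; left; constructor <;> linarith
    obtain ⟨y, -, hy⟩ := hiv hmem
    obtain ⟨j, hj⟩ := key y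
    have hdy : d y = j := by simp [hd, hj]
    have : (2 * j : ℤ) = 2 * k - 1 := by
      exact_mod_cast (by rw [hdy] at hy; linarith : (2 * j : ℝ) = 2 * k - 1)
    omega

lemma coe_S1_add (a b : ℝ) : ((a + b : ℝ) : S1) = (a : S1) + (b : S1) := rfl

lemma translationNumber_shift {F G : CircleDeg1Lift} {m : ℤ}
    (h : ∀ x, G x = F x + m) :
    G.translationNumber = F.translationNumber + m := by
  have hG : G = ((CircleDeg1Lift.translate (Multiplicative.ofAdd (m : ℝ)) :
      CircleDeg1Liftˣ) : CircleDeg1Lift) * F := by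
    apply CircleDeg1Lift.ext
    intro x
    rw [CircleDeg1Lift.mul_apply, CircleDeg1Lift.translate_apply, h x, add_comm]
  have hc : Commute ((CircleDeg1Lift.translate (Multiplicative.ofAdd (m : ℝ)) :
      CircleDeg1Liftˣ) : CircleDeg1Lift) F := by
    apply CircleDeg1Lift.ext
    intro x
    rw [CircleDeg1Lift.mul_apply, CircleDeg1Lift.mul_apply,
      CircleDeg1Lift.translate_apply, CircleDeg1Lift.translate_apply, F.map_int_add]
  rw [hG, CircleDeg1Lift.translationNumber_mul_of_commute hc,
    CircleDeg1Lift.translationNumber_translate, add_comm]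

lemma rotationNumber_eq {f : S1 ≃ₜ S1} {F : CircleDeg1Liftˣ}
    (hF : IsLiftOf (F : CircleDeg1Lift) f) :
    rotationNumber f = (((F : CircleDeg1Lift).translationNumber : ℝ) : S1) := by
  have h : ∃ G : CircleDeg1Liftˣ, IsLiftOf (G : CircleDeg1Lift) f := ⟨F, hF⟩
  rw [rotationNumber, dif_pos h]
  obtain ⟨m, hm⟩ := lift_sub_lift hF h.choose_spec
  rw [translationNumber_shift hm, coe_S1_add, coe_S1_int, add_zero]

/-- The displacement function of a lift, descended to the circle. -/
def disp (F : CircleDeg1Lift) : S1 → ℝ :=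
  AddCircle.liftIco 1 0 (fun x => F x - x)

lemma disp_coe (F : CircleDeg1Lift) (x : ℝ) : disp F (x : S1) = F x - x := by
  have h1 : ((x : ℝ) : S1) = ((Int.fract x : ℝ) : S1) := by
    rw [coe_S1_eq_iff]
    exact ⟨-⌊x⌋, by rw [Int.cast_neg]; linarith [Int.self_sub_fract x]⟩
  rw [h1, disp, AddCircle.liftIco_zero_coe_apply ⟨Int.fract_nonneg x, Int.fract_lt_one x⟩,
    F.map_fract_sub_fract_eq]

lemma disp_continuous (F : CircleDeg1Liftˣ) : Continuous (disp (F : CircleDeg1Lift)) := by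
  apply AddCircle.liftIco_zero_continuous
  · simp [CircleDeg1Lift.map_add_one, show (0:ℝ) + 1 = 1 by ring]
    rw [show (1:ℝ) = 0 + 1 by ring, (F : CircleDeg1Lift).map_add_one]
    ring
  · exact ((unit_continuous F).sub continuous_id).continuousOn

lemma disp_abs_le (F : CircleDeg1Lift) (z : S1) :
    |disp F z - F.translationNumber| ≤ 1 := by
  obtain ⟨x, rfl⟩ := QuotientAddGroup.mk_surjective z
  rw [show (QuotientAddGroup.mk x : S1) = (x : S1) from rfl, disp_coe]
  have h1 : F x < x + F.translationNumber + 1 := F.map_lt_add_translationNumber_add_one x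
  have h2 : F.translationNumber ≤ (⌈F x - x⌉ : ℝ) := by
    exact_mod_cast F.translationNumber_le_ceil_sub x
  have h3 : (⌈F x - x⌉ : ℝ) < F x - x + 1 := Int.ceil_lt_add_one _
  rw [abs_le]; constructor <;> linarith

/-- `z ↦ disp F z - disp F ∘ g` cocycle property. -/
lemma disp_cocycle {F G : CircleDeg1Liftˣ} {g : S1 ≃ₜ S1}
    (hG : IsLiftOf (G : CircleDeg1Lift) g) (z : S1) :
    disp ((F * G : CircleDeg1Liftˣ) : CircleDeg1Lift) z
      = disp (F : CircleDeg1Lift) (g z) + disp (G : CircleDeg1Lift) z := by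
  obtain ⟨x, rfl⟩ := QuotientAddGroup.mk_surjective z
  have hz : (QuotientAddGroup.mk x : S1) = (x : S1) := rfl
  rw [hz, hG x, disp_coe, disp_coe, disp_coe]
  simp [Units.val_mul, CircleDeg1Lift.mul_apply]

section Invariant

variable {Γ : Subgroup (S1 ≃ₜ S1)} {μ : Measure S1} [IsProbabilityMeasure μ]

lemma integrable_of_continuous {g : S1 → ℝ} (hg : Continuous g) : Integrable g μ :=
  hg.integrable_of_hasCompactSupport
    (IsCompact.of_isClosed_subset isCompact_univ (isClosed_tsupport g) (subset_univ _))

lemma integral_comp_eq (hinv : ∀ γ ∈ Γ, Measure.map (⇑γ) μ = μ) {γ : S1 ≃ₜ S1} (hγ : γ ∈ Γ)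
    {g : S1 → ℝ} (hg : Continuous g) : ∫ z, g (γ z) ∂μ = ∫ z, g z ∂μ := by
  conv_rhs => rw [← hinv γ hγ]
  exact (integral_map γ.continuous.aemeasurable hg.aestronglyMeasurable).symm

lemma integral_disp_sub_tau_le (G : CircleDeg1Liftˣ) :
    |(∫ z, disp (G : CircleDeg1Lift) z ∂μ) - (G : CircleDeg1Lift).translationNumber| ≤ 1 := by
  have h1 : (∫ z, disp (G : CircleDeg1Lift) z ∂μ) - (G : CircleDeg1Lift).translationNumber
      = ∫ z, (disp (G : CircleDeg1Lift) z - (G : CircleDeg1Lift).translationNumber) ∂μ := by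
    rw [integral_sub (integrable_of_continuous (disp_continuous G)) (integrable_const _),
      integral_const]
    simp [measure_univ]
  rw [h1, ← Real.norm_eq_abs]
  have := norm_integral_le_of_norm_le_const (μ := μ)
    (f := fun z => disp (G : CircleDeg1Lift) z - (G : CircleDeg1Lift).translationNumber)
    (C := 1) (Filter.Eventually.of_forall fun z => by
      rw [Real.norm_eq_abs]; exact disp_abs_le _ z)
  simpa [measure_univ] using this

lemma integral_disp_mul (hinv : ∀ γ ∈ Γ, Measure.map (⇑γ) μ = μ)
    {F G : CircleDeg1Liftˣ} {g : S1 ≃ₜ S1} (hg : g ∈ Γ)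
    (hG : IsLiftOf (G : CircleDeg1Lift) g) :
    (∫ z, disp ((F * G : CircleDeg1Liftˣ) : CircleDeg1Lift) z ∂μ)
      = (∫ z, disp (F : CircleDeg1Lift) z ∂μ) + ∫ z, disp (G : CircleDeg1Lift) z ∂μ := by
  have h1 : ∀ z, disp ((F * G : CircleDeg1Liftˣ) : CircleDeg1Lift) z
      = disp (F : CircleDeg1Lift) (g z) + disp (G : CircleDeg1Lift) z :=
    disp_cocycle hG
  have hInt1 : Integrable (fun a : S1 => disp (F : CircleDeg1Lift) (g a)) μ :=
    integrable_of_continuous ((disp_continuous F).comp g.continuous)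
  rw [integral_congr_ae (Filter.Eventually.of_forall h1),
    integral_add hInt1 (integrable_of_continuous (disp_continuous G)),
    integral_comp_eq hinv hg (disp_continuous F)]

lemma tau_eq_integral (hinv : ∀ γ ∈ Γ, Measure.map (⇑γ) μ = μ)
    {F : CircleDeg1Liftˣ} {f : S1 ≃ₜ S1} (hf : f ∈ Γ)
    (hF : IsLiftOf (F : CircleDeg1Lift) f) :
    (F : CircleDeg1Lift).translationNumber = ∫ z, disp (F : CircleDeg1Lift) z ∂μ := by
  have hpow : ∀ n : ℕ, (∫ z, disp ((F ^ n : CircleDeg1Liftˣ) : CircleDeg1Lift) z ∂μ)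
      = n * ∫ z, disp (F : CircleDeg1Lift) z ∂μ := by
    intro n
    induction n with
    | zero =>
        simp only [pow_zero, Nat.cast_zero, zero_mul]
        have : ∀ z, disp ((1 : CircleDeg1Liftˣ) : CircleDeg1Lift) z = 0 := by
          intro z
          obtain ⟨x, rfl⟩ := QuotientAddGroup.mk_surjective z
          rw [show (QuotientAddGroup.mk x : S1) = (x : S1) from rfl]
          simp [disp_coe]
        rw [integral_congr_ae (Filter.Eventually.of_forall this)]
        simp
    | succ n ih =>
        rw [pow_succ' F n, integral_disp_mul hinv (pow_mem hf n) (isLiftOf_pow hF n), ih]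
        push_cast; ring
  have hτ : ∀ n : ℕ, ((F ^ n : CircleDeg1Liftˣ) : CircleDeg1Lift).translationNumber
      = n * (F : CircleDeg1Lift).translationNumber := by
    intro n
    rw [Units.val_pow_eq_pow_val, CircleDeg1Lift.translationNumber_pow]
  by_contra hne
  set δ := |(∫ z, disp (F : CircleDeg1Lift) z ∂μ) - (F : CircleDeg1Lift).translationNumber|
    with hδ
  have hδpos : 0 < δ := abs_pos.2 (sub_ne_zero.2 fun h => hne h.symm)
  obtain ⟨n, hn⟩ := exists_nat_gt (1 / δ)
  have hn' : (1 : ℝ) < n * δ := by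
    rw [div_lt_iff₀ hδpos] at hn
    linarith
  have := integral_disp_sub_tau_le (μ := μ) (F ^ n)
  rw [hpow n, hτ n, ← mul_sub, abs_mul, Nat.abs_cast, ← hδ] at this
  linarith

end Invariant

lemma rotationNumber_one : rotationNumber (1 : S1 ≃ₜ S1) = 0 := by
  rw [rotationNumber_eq isLiftOf_one]
  have h1 : ((1 : CircleDeg1Liftˣ) : CircleDeg1Lift).translationNumber = 0 := by
    rw [Units.val_one, CircleDeg1Lift.translationNumber_one]
  rw [h1]
  exact_mod_cast coe_S1_int 0

section Hom

variable {Γ : Subgroup (S1 ≃ₜ S1)} {μ : Measure S1} [IsProbabilityMeasure μ]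

lemma rotationNumber_mul (hinv : ∀ γ ∈ Γ, Measure.map (⇑γ) μ = μ)
    (hΓ : ∀ f ∈ Γ, OrientationPreserving f)
    {f g : S1 ≃ₜ S1} (hf : f ∈ Γ) (hg : g ∈ Γ) :
    rotationNumber (f * g) = rotationNumber f + rotationNumber g := by
  obtain ⟨F, hF⟩ := hΓ f hf
  obtain ⟨G, hG⟩ := hΓ g hg
  rw [rotationNumber_eq hF, rotationNumber_eq hG, rotationNumber_eq (isLiftOf_mul hF hG),
    tau_eq_integral (μ := μ) hinv (mul_mem hf hg) (isLiftOf_mul hF hG),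
    integral_disp_mul hinv hg hG, tau_eq_integral (μ := μ) hinv hf hF,
    tau_eq_integral (μ := μ) hinv hg hG, coe_S1_add]

lemma rotationNumber_inv (hinv : ∀ γ ∈ Γ, Measure.map (⇑γ) μ = μ)
    (hΓ : ∀ f ∈ Γ, OrientationPreserving f)
    {f : S1 ≃ₜ S1} (hf : f ∈ Γ) :
    rotationNumber f⁻¹ = -rotationNumber f := by
  have h := rotationNumber_mul hinv hΓ (inv_mem hf) hf
  rw [inv_mul_cancel, rotationNumber_one] at h
  exact (neg_eq_of_add_eq_zero_left h.symm).symm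

end Hom

section Dyn

variable {Γ : Subgroup (S1 ≃ₜ S1)} {μ : Measure S1} [IsProbabilityMeasure μ]

lemma no_escape (hinv : ∀ γ ∈ Γ, Measure.map (⇑γ) μ = μ)
    {f : S1 ≃ₜ S1} (hf : f ∈ Γ) {F : CircleDeg1Liftˣ}
    (hF : IsLiftOf (F : CircleDeg1Lift) f)
    (hτ : (F : CircleDeg1Lift).translationNumber = 0)
    {a : ℝ} (ha : a < (F : CircleDeg1Lift) a)
    (hpos : ∀ U : Set S1, IsOpen U → (a : S1) ∈ U → μ U ≠ 0) : False := by
  classical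
  set c : ℤ → ℝ := fun n => ((F ^ n : CircleDeg1Liftˣ) : CircleDeg1Lift) a with hc
  have hc0 : c 0 = a := by simp [hc]
  have hstep : ∀ n : ℤ, c (n + 1) = (F : CircleDeg1Lift) (c n) := by
    intro n
    have h1 : F ^ (n + 1) = F * F ^ n := by rw [add_comm, zpow_one_add]
    simp only [hc, h1, Units.val_mul, CircleDeg1Lift.mul_apply]
  have hmono : StrictMono c := by
    apply strictMono_int_of_lt_succ
    intro n
    have h1 : F ^ (n + 1) = F ^ n * F := by rw [zpow_add_one]
    have h2 : c (n + 1) = ((F ^ n : CircleDeg1Liftˣ) : CircleDeg1Lift)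
        ((F : CircleDeg1Lift) a) := by
      simp only [hc, h1, Units.val_mul, CircleDeg1Lift.mul_apply]
    rw [h2, hc]
    exact unit_strictMono (F ^ n) ha
  have hτn : ∀ n : ℤ, ((F ^ n : CircleDeg1Liftˣ) : CircleDeg1Lift).translationNumber = 0 := by
    intro n
    rw [CircleDeg1Lift.translationNumber_zpow, hτ, mul_zero]
  have hub : ∀ n : ℤ, c n ≤ a + 1 := by
    intro n
    by_contra h
    push_neg at h
    have h1 : a + ((1 : ℤ) : ℝ) ≤ ((F ^ n : CircleDeg1Liftˣ) : CircleDeg1Lift) a := by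
      push_cast; exact (le_of_lt h)
    have h2 := ((F ^ n : CircleDeg1Liftˣ) : CircleDeg1Lift).le_translationNumber_of_add_int_le h1
    rw [hτn n] at h2
    norm_num at h2
  have hlb : ∀ n : ℤ, a - 1 ≤ c n := by
    intro n
    by_contra h
    push_neg at h
    have h1 : ((F ^ n : CircleDeg1Liftˣ) : CircleDeg1Lift) a ≤ a + ((-1 : ℤ) : ℝ) := by
      push_cast
      show c n ≤ a + (-1)
      linarith
    have h2 := ((F ^ n : CircleDeg1Liftˣ) : CircleDeg1Lift).translationNumber_le_of_le_add_int h1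
    rw [hτn n] at h2
    norm_num at h2
  have bddA : BddAbove (range c) := ⟨a + 1, by rintro _ ⟨n, rfl⟩; exact hub n⟩
  have bddB : BddBelow (range c) := ⟨a - 1, by rintro _ ⟨n, rfl⟩; exact hlb n⟩
  set B := ⨆ n, c n with hB
  set A := ⨅ n, c n with hA
  have htendB : Tendsto c atTop (𝓝 B) := tendsto_atTop_ciSup hmono.monotone bddA
  have htendA : Tendsto c atBot (𝓝 A) := tendsto_atBot_ciInf hmono.monotone bddB
  have hFA : (F : CircleDeg1Lift) A = A := by
    have h1 : Tendsto (fun n : ℤ => (F : CircleDeg1Lift) (c n)) atBot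
        (𝓝 ((F : CircleDeg1Lift) A)) := ((unit_continuous F).tendsto A).comp htendA
    have h3 : Tendsto (fun n : ℤ => c (n + 1)) atBot (𝓝 A) :=
      htendA.comp (tendsto_atBot_add_const_right atBot 1 tendsto_id)
    have h2 : (fun n : ℤ => c (n + 1)) = fun n : ℤ => (F : CircleDeg1Lift) (c n) :=
      funext fun n => hstep n
    rw [h2] at h3
    exact tendsto_nhds_unique h1 h3
  have hcB : ∀ n, c n ≤ B := fun n => le_ciSup bddA n
  have hAc : ∀ n, A ≤ c n := fun n => ciInf_le bddB n
  have hBA : B ≤ A + 1 := by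
    by_contra h
    push_neg at h
    have hfix : (F : CircleDeg1Lift) (A + 1) = A + 1 := by
      rw [CircleDeg1Lift.map_add_one, hFA]
    have hlt : ∀ n : ℤ, c n < A + 1 → c (n + 1) < A + 1 := by
      intro n hn
      have h1 : c (n + 1) ≤ A + 1 := by
        rw [hstep]
        calc (F : CircleDeg1Lift) (c n) ≤ (F : CircleDeg1Lift) (A + 1) :=
              (F : CircleDeg1Lift).mono hn.le
          _ = A + 1 := hfix
      rcases h1.lt_or_eq with h2 | h2
      · exact h2
      · exfalso
        have h3 : c (n + 1 + 1) = A + 1 := by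
          rw [hstep (n + 1), h2, hfix]
        have h4 : c (n + 1) < c (n + 1 + 1) := hmono (by linarith)
        rw [h2, h3] at h4
        exact lt_irrefl _ h4
    have hm : ∃ m, c m < A + 1 := exists_lt_of_ciInf_lt (by rw [← hA]; linarith)
    obtain ⟨m, hm⟩ := hm
    have hall : ∀ n, m ≤ n → c n < A + 1 :=
      Int.le_induction hm (fun n _ ih => hlt n ih)
    have hallall : ∀ n, c n < A + 1 := by
      intro n
      rcases le_total m n with h' | h'
      · exact hall n h'
      · exact lt_of_le_of_lt (hmono.monotone h') hm
    have : B ≤ A + 1 := ciSup_le fun n => (hallall n).le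
    linarith
  -- the open arc around `a` and its images
  set J : Set S1 := (fun x : ℝ => (x : S1)) '' Ioo (c (-1)) (c 1) with hJ
  have hπopen : IsOpenMap (fun x : ℝ => (x : S1)) := by
    exact QuotientAddGroup.isOpenMap_coe
  have hJopen : IsOpen J := hπopen _ isOpen_Ioo
  have haJ : (a : S1) ∈ J := ⟨a, ⟨by rw [← hc0]; exact hmono (by norm_num),
    by rw [← hc0]; exact hmono (by norm_num)⟩, rfl⟩
  have hμJ : μ J ≠ 0 := hpos J hJopen haJ
  set E : ℕ → Set S1 := fun k =>
    (fun x : ℝ => (x : S1)) '' Ioo (c (2 * k - 1)) (c (2 * k + 1)) with hE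
  have hE0 : E 0 = J := by simp [hE, hJ]
  have hshift : ∀ (k : ℕ) (j : ℤ),
      ((F ^ (2 * k) : CircleDeg1Liftˣ) : CircleDeg1Lift) (c j) = c (2 * (k : ℤ) + j) := by
    intro k j
    have h1 : (F ^ (2 * k) : CircleDeg1Liftˣ) = F ^ ((2 * k : ℕ) : ℤ) :=
      (zpow_natCast F (2 * k)).symm
    have h2 : (F ^ ((2 * k : ℕ) : ℤ)) * F ^ j = F ^ (((2 * k : ℕ) : ℤ) + j) :=
      (zpow_add F _ j).symm
    have h3 : (((2 * k : ℕ) : ℤ) + j) = 2 * (k : ℤ) + j := by push_cast; ring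
    calc ((F ^ (2 * k) : CircleDeg1Liftˣ) : CircleDeg1Lift) (c j)
        = ((F ^ ((2 * k : ℕ) : ℤ) * F ^ j : CircleDeg1Liftˣ) : CircleDeg1Lift) a := by
          rw [h1, Units.val_mul, CircleDeg1Lift.mul_apply, hc]
      _ = c (2 * (k : ℤ) + j) := by rw [h2, h3, hc]
  have hEk : ∀ k : ℕ, E k = (fun z => (f ^ (2 * k) : S1 ≃ₜ S1) z) '' E 0 := by
    intro k
    have hlift := isLiftOf_pow hF (2 * k)
    have h1 : (fun z => (f ^ (2 * k) : S1 ≃ₜ S1) z) '' E 0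
        = (fun x : ℝ => (x : S1)) ''
          (((F ^ (2 * k) : CircleDeg1Liftˣ) : CircleDeg1Lift) '' Ioo (c (-1)) (c 1)) := by
      rw [hE0, hJ, Set.image_image, Set.image_image]
      exact Set.image_congr fun x _ => (hlift x).symm ▸ rfl
    have h2 : ((F ^ (2 * k) : CircleDeg1Liftˣ) : CircleDeg1Lift) '' Ioo (c (-1)) (c 1)
        = Ioo (c (2 * (k : ℤ) + -1)) (c (2 * (k : ℤ) + 1)) := by
      have := OrderIso.image_Ioo (CircleDeg1Lift.toOrderIso (F ^ (2 * k))) (c (-1)) (c 1)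
      rw [CircleDeg1Lift.coe_toOrderIso] at this
      rw [this, hshift k (-1), hshift k 1]
    rw [h1, h2, hE]
    rw [show 2 * (k : ℤ) + -1 = 2 * (k : ℤ) - 1 by ring]
  have hμE : ∀ k : ℕ, μ (E k) = μ J := by
    intro k
    set g : S1 ≃ₜ S1 := (f ^ (2 * k) : S1 ≃ₜ S1) with hg
    have hgΓ : g ∈ Γ := pow_mem hf _
    have hmeasJ : MeasurableSet J := hJopen.measurableSet
    have him : E k = ⇑g '' J := by rw [hEk k, hE0]
    have hpre : ⇑g '' J = ⇑g.symm ⁻¹' J := by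
      ext z
      constructor
      · rintro ⟨w, hw, rfl⟩
        simpa [Homeomorph.symm_apply_apply] using hw
      · intro hz
        exact ⟨g.symm z, hz, g.apply_symm_apply z⟩
    have hsymm : ⇑g.symm = ⇑(g⁻¹ : S1 ≃ₜ S1) := rfl
    rw [him, hpre, hsymm]
    have hmap := hinv g⁻¹ (inv_mem hgΓ)
    calc μ (⇑(g⁻¹ : S1 ≃ₜ S1) ⁻¹' J)
        = (Measure.map (⇑(g⁻¹ : S1 ≃ₜ S1)) μ) J := by
          rw [Measure.map_apply (g⁻¹ : S1 ≃ₜ S1).continuous.measurable hmeasJ]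
      _ = μ J := by rw [hmap]
  have hmemIoo : ∀ (k : ℕ) (y : ℝ), y ∈ Ioo (c (2 * k - 1)) (c (2 * k + 1)) →
      A < y ∧ y < A + 1 := by
    intro k y hy
    constructor
    · exact lt_of_le_of_lt (hAc _) hy.1
    · exact lt_of_lt_of_le hy.2 (le_trans (hcB _) hBA)
  have hdisj : Pairwise (Function.onFun Disjoint E) := by
    intro k l hkl
    rw [Function.onFun, Set.disjoint_left]
    rintro z ⟨y, hy, rfl⟩ ⟨y', hy', hyy'⟩
    obtain ⟨j, hj⟩ := (coe_S1_eq_iff y' y).mp hyy'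
    have hb1 := hmemIoo k y hy
    have hb2 := hmemIoo l y' hy'
    have hj0 : j = 0 := by
      have h1 : (-1 : ℝ) < (j : ℝ) := by linarith
      have h2 : (j : ℝ) < 1 := by linarith
      have h1' : (-1 : ℤ) < j := by exact_mod_cast h1
      have h2' : j < 1 := by exact_mod_cast h2
      omega
    rw [hj0] at hj
    push_cast at hj
    rw [add_zero] at hj
    subst hj
    rcases hkl.lt_or_gt with h | h
    · have h1 : c (2 * (k : ℤ) + 1) ≤ c (2 * (l : ℤ) - 1) := by
        apply hmono.monotone
        have : (k : ℤ) < l := by exact_mod_cast h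
        omega
      linarith [hy.2, hy'.1]
    · have h1 : c (2 * (l : ℤ) + 1) ≤ c (2 * (k : ℤ) - 1) := by
        apply hmono.monotone
        have : (l : ℤ) < k := by exact_mod_cast h
        omega
      linarith [hy.1, hy'.2]
  have hmeasE : ∀ k : ℕ, MeasurableSet (E k) := fun k => (hπopen _ isOpen_Ioo).measurableSet
  have hsum := measure_iUnion (μ := μ) hdisj hmeasE
  have hle : μ (⋃ k, E k) ≤ 1 := prob_le_one
  rw [hsum, tsum_congr hμE, ENNReal.tsum_const_eq_top_of_ne_zero hμJ] at hle
  simp at hle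

lemma fix_of_rot_zero (hinv : ∀ γ ∈ Γ, Measure.map (⇑γ) μ = μ)
    {f : S1 ≃ₜ S1} (hf : f ∈ Γ) (hOP : OrientationPreserving f)
    (hρ : rotationNumber f = 0) {x0 : S1}
    (hx0 : ∀ U : Set S1, IsOpen U → x0 ∈ U → μ U ≠ 0) :
    f x0 = x0 := by
  obtain ⟨F, hF⟩ := hOP
  rw [rotationNumber_eq hF] at hρ
  obtain ⟨m, hm⟩ := (AddCircle.coe_eq_zero_iff _).mp hρ
  have hm' : (F : CircleDeg1Lift).translationNumber = (m : ℝ) := by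
    rw [← hm, zsmul_eq_mul, mul_one]
  set F' : CircleDeg1Liftˣ :=
    CircleDeg1Lift.translate (Multiplicative.ofAdd (-(m : ℝ))) * F with hF'def
  have hF'x : ∀ x : ℝ, (F' : CircleDeg1Lift) x = (F : CircleDeg1Lift) x + (-m : ℤ) := by
    intro x
    simp only [hF'def, Units.val_mul, CircleDeg1Lift.mul_apply,
      CircleDeg1Lift.translate_apply]
    push_cast; ring
  have hF' : IsLiftOf (F' : CircleDeg1Lift) f := by
    intro x
    rw [hF x, coe_S1_eq_iff]
    exact ⟨-m, hF'x x⟩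
  have hτ' : (F' : CircleDeg1Lift).translationNumber = 0 := by
    rw [translationNumber_shift hF'x, hm']
    push_cast; ring
  by_contra hne
  obtain ⟨a, rfl⟩ := QuotientAddGroup.mk_surjective x0
  have hcoe : (QuotientAddGroup.mk a : S1) = (a : S1) := rfl
  rw [hcoe] at hne hx0
  have hFa : ((F' : CircleDeg1Lift) a : S1) ≠ (a : S1) := by
    rw [← hF' a]; exact hne
  have hne2 : (F' : CircleDeg1Lift) a ≠ a := fun h => hFa (by rw [h])
  rcases hne2.lt_or_gt with hlt | hgt
  · -- F' a < a : use the inverse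
    have hτinv : ((F'⁻¹ : CircleDeg1Liftˣ) : CircleDeg1Lift).translationNumber = 0 := by
      rw [CircleDeg1Lift.translationNumber_units_inv, hτ', neg_zero]
    have hlt' : a < ((F'⁻¹ : CircleDeg1Liftˣ) : CircleDeg1Lift) a := by
      have := unit_strictMono F'⁻¹ hlt
      rwa [CircleDeg1Lift.units_inv_apply_apply] at this
    exact no_escape hinv (inv_mem hf) (isLiftOf_inv hF') hτinv hlt' hx0
  · exact no_escape hinv hf hF' hτ' hgt hx0

end Dyn

lemma torsion_finite (n : ℕ) (hn : 0 < n) : {r : S1 | n • r = 0}.Finite := by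
  apply Set.Finite.subset
    (Set.finite_range (fun j : Fin n => ((((j : ℕ) : ℝ) / (n : ℝ) : ℝ) : S1)))
  intro r hr
  obtain ⟨y, rfl⟩ := QuotientAddGroup.mk_surjective r
  have hcoe : (QuotientAddGroup.mk y : S1) = (y : S1) := rfl
  rw [hcoe] at hr ⊢
  have h1 : ((n • y : ℝ) : S1) = 0 := by
    rw [AddCircle.coe_nsmul]; exact hr
  obtain ⟨mm, hmm⟩ := (AddCircle.coe_eq_zero_iff _).mp h1
  have hmm' : (mm : ℝ) = n * y := by
    rw [zsmul_eq_mul, mul_one] at hmm; rw [hmm, nsmul_eq_mul]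
  have hq0 : 0 ≤ mm % (n : ℤ) := Int.emod_nonneg mm (by exact_mod_cast hn.ne')
  have hqn : mm % (n : ℤ) < (n : ℤ) := Int.emod_lt_of_pos mm (by exact_mod_cast hn)
  refine ⟨⟨(mm % (n : ℤ)).toNat, by omega⟩, ?_⟩
  simp only
  rw [coe_S1_eq_iff]
  refine ⟨mm / (n : ℤ), ?_⟩
  have hdiv : mm % (n : ℤ) + (n : ℤ) * (mm / (n : ℤ)) = mm := Int.emod_add_mul_ediv mm n
  have hcast : (((mm % (n : ℤ)).toNat : ℕ) : ℝ) = ((mm % (n : ℤ) : ℤ) : ℝ) := by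
    exact_mod_cast congrArg (Int.cast : ℤ → ℝ) (Int.toNat_of_nonneg hq0)
  have hnne : (n : ℝ) ≠ 0 := by exact_mod_cast hn.ne'
  rw [hcast]
  have : ((mm % (n : ℤ) : ℤ) : ℝ) + (n : ℝ) * ((mm / (n : ℤ) : ℤ) : ℝ) = (mm : ℝ) := by
    exact_mod_cast congrArg (Int.cast : ℤ → ℝ) hdiv
  field_simp
  linarith [hmm', this]

lemma finite_image_of_finite_orbit {Γ : Subgroup (S1 ≃ₜ S1)}
    (hΓ : ∀ f ∈ Γ, OrientationPreserving f) (h : HasFiniteOrbit Γ) :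
    (rotationNumber '' (Γ : Set (S1 ≃ₜ S1))).Finite := by
  classical
  obtain ⟨x, hx⟩ := h
  set N := hx.toFinset.card with hN
  have hsub : rotationNumber '' (Γ : Set (S1 ≃ₜ S1)) ⊆ {r : S1 | (Nat.factorial N) • r = 0} := by
    rintro _ ⟨γ, hγ, rfl⟩
    -- find a period k ≤ N
    have hmem : ∀ i : ℕ, (γ ^ i) x ∈ hx.toFinset := by
      intro i
      rw [Set.Finite.mem_toFinset]
      exact ⟨γ ^ i, pow_mem hγ i, rfl⟩
    have hcard : hx.toFinset.card < (Finset.range (N + 1)).card := by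
      rw [Finset.card_range]; omega
    obtain ⟨i, hi, j, hj, hij, heq⟩ :=
      Finset.exists_ne_map_eq_of_card_lt_of_maps_to hcard (fun i _ => hmem i)
    have key : ∀ i j : ℕ, i < j → j ≤ N → (γ ^ j) x = (γ ^ i) x →
        ∃ k : ℕ, 1 ≤ k ∧ k ≤ N ∧ (γ ^ k) x = x := by
      intro i j hlt hjN hfix
      refine ⟨j - i, by omega, by omega, ?_⟩
      have h1 : (γ ^ i) ((γ ^ (j - i)) x) = (γ ^ i) x := by
        rw [← homeo_mul_apply, ← pow_add, show i + (j - i) = j by omega, hfix]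
      exact (γ ^ i).injective h1
    have hk : ∃ k : ℕ, 1 ≤ k ∧ k ≤ N ∧ (γ ^ k) x = x := by
      rcases lt_or_gt_of_ne hij with hlt | hlt
      · exact key i j hlt (by simpa using Nat.lt_succ_iff.mp (Finset.mem_range.mp hj)) heq.symm
      · exact key j i hlt (by simpa using Nat.lt_succ_iff.mp (Finset.mem_range.mp hi)) heq
    obtain ⟨k, hk1, hkN, hkfix⟩ := hk
    obtain ⟨F, hF⟩ := hΓ γ hγ
    obtain ⟨a, ha⟩ := QuotientAddGroup.mk_surjective x
    have hacoe : (QuotientAddGroup.mk a : S1) = (a : S1) := rfl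
    rw [← ha, hacoe] at hkfix
    have h2 : ((((F ^ k : CircleDeg1Liftˣ) : CircleDeg1Lift)) a : S1) = (a : S1) := by
      rw [← isLiftOf_pow hF k a]; exact hkfix
    obtain ⟨mm, hmm⟩ := (coe_S1_eq_iff _ _).mp h2
    rw [Units.val_pow_eq_pow_val] at hmm
    have h3 : ((F : CircleDeg1Lift) ^ k) a = a + ((-mm : ℤ) : ℝ) := by
      push_cast
      linarith [hmm]
    have hτ := (F : CircleDeg1Lift).translationNumber_of_map_pow_eq_add_int h3
      (by omega : 0 < k)
    show (Nat.factorial N) • rotationNumber γ = 0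
    rw [rotationNumber_eq hF, hτ, ← AddCircle.coe_nsmul]
    set q : ℕ := Nat.factorial N / k with hq
    have hdvd : (q : ℝ) * (k : ℝ) = ((Nat.factorial N : ℕ) : ℝ) := by
      exact_mod_cast Nat.div_mul_cancel (Nat.dvd_factorial (by omega) hkN)
    have hkne : (k : ℝ) ≠ 0 := by positivity
    have hsm : (Nat.factorial N) • (((-mm : ℤ) : ℝ) / (k : ℝ))
        = ((-mm * (q : ℤ) : ℤ) : ℝ) := by
      rw [nsmul_eq_mul]
      push_cast
      field_simp
      linear_combination ((mm : ℝ)) * hdvd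
    rw [hsm, coe_S1_int]
  exact Set.Finite.subset (torsion_finite (Nat.factorial N) (Nat.factorial_pos N)) hsub

end RotAux

/-- A subgroup of `Homeo₊(S¹)` preserving a Borel probability measure on the
circle has a finite image under the rotation number function iff it has a finite orbit. -/
theorem finite_rotation_image_iff_finite_orbit_of_invariant_measure
    (Γ : Subgroup (S1 ≃ₜ S1)) (hΓ : ∀ f ∈ Γ, OrientationPreserving f)
    (hmeas : HasInvariantProbMeasure Γ) :
    (rotationNumber '' (Γ : Set (S1 ≃ₜ S1))).Finite ↔ HasFiniteOrbit Γ := by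
  obtain ⟨μ, hprob, hinv⟩ := hmeas
  haveI := hprob
  constructor
  · intro hfin
    have h1 : μ (Set.univ : Set S1) ≠ 0 := by simp
    obtain ⟨x, -, hx⟩ := exists_mem_forall_mem_nhdsWithin_pos_measure h1
    have hx' : ∀ U : Set S1, IsOpen U → x ∈ U → μ U ≠ 0 := by
      intro U hU hxU
      exact (hx U (by rw [nhdsWithin_univ]; exact hU.mem_nhds hxU)).ne'
    refine ⟨x, ?_⟩
    classical
    set s : AddCircle (1 : ℝ) → S1 := fun r =>
      if h : ∃ δ, δ ∈ Γ ∧ rotationNumber δ = r then h.choose x else x with hs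
    apply Set.Finite.subset (hfin.image s)
    rintro _ ⟨γ, hγ, rfl⟩
    have hγ' : γ ∈ Γ := hγ
    refine ⟨rotationNumber γ, ⟨γ, hγ, rfl⟩, ?_⟩
    have hex : ∃ δ, δ ∈ Γ ∧ rotationNumber δ = rotationNumber γ := ⟨γ, hγ', rfl⟩
    rw [hs]
    simp only
    rw [dif_pos hex]
    obtain ⟨hδΓ, hδρ⟩ := hex.choose_spec
    have hmm : hex.choose⁻¹ * γ ∈ Γ := mul_mem (inv_mem hδΓ) hγ'
    have h0 : rotationNumber (hex.choose⁻¹ * γ) = 0 := by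
      rw [RotAux.rotationNumber_mul hinv hΓ (inv_mem hδΓ) hγ',
        RotAux.rotationNumber_inv hinv hΓ hδΓ, hδρ, neg_add_cancel]
    have hfix : (hex.choose⁻¹ * γ) x = x :=
      RotAux.fix_of_rot_zero hinv hmm (hΓ _ hmm) h0 hx'
    have h2 : hex.choose ((hex.choose⁻¹ * γ) x) = γ x := by
      rw [← RotAux.homeo_mul_apply, ← mul_assoc, mul_inv_cancel, one_mul]
    rw [hfix] at h2
    exact h2
  · exact RotAux.finite_image_of_finite_orbit hΓ

end
end

section
/- Let {gₙ} be a sequence of C¹-maps from an open interval I ⊂ ℝ into ℝ, and let {λₙ} be a sequence of positive real numbers diverging to infinity. Assume there exist positive real numbers A₁, A₂, A₃ such that for all n: A₁ ≤ inf_{x∈I} λₙ|(gₙ−id)(x)| ≤ sup_{x∈I} λₙ|(gₙ−id)(x)| ≤ A₂ and sup_{x∈I} λₙ|(gₙ−id)′(x)| ≤ A₃. Then for each open, relatively compact subinterval J of I there exist a nowhere vanishing continuous vector field X on J and a subsequence of {gₙ} (still denoted {gₙ}) with the following property: for every compact subinterval J₀ of J and every t₀ > 0 such that the local flow φᵗ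 associated to X is defined on J₀ for all 0 ≤ t ≤ t₀, the sequence {gₙ^{[λₙt₀]}} (where [λₙt₀] is the integer part of λₙt₀ and gₙ^k denotes the k-th iterate) converges to φ^{t₀} uniformly on J₀. -/
open Filter Topology Set MeasureTheory Classical
open scoped BoundedContinuousFunction

noncomputable section

set_option maxHeartbeats 1000000 in
/-- (Lemma 3.4 of the paper.) Given `C¹`-maps `gₙ` on an open interval `I`
and `λₙ → ∞` with `A₁ ≤ λₙ|gₙ - id| ≤ A₂` and `λₙ|(gₙ - id)'| ≤ A₃` on `I`, every open
relatively compact subinterval `J = ]c, d[` of `I` carries a nowhere vanishing continuous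
vector field `X` such that, along a subsequence, `gₙ^{[λₙ t₀]} → φ^{t₀}` uniformly on any
compact subinterval `J₀` of `J` on which the local flow `φᵗ` of `X` is defined up to time
`t₀`. -/
theorem vector_field_from_nondiscreteness
    (α β : ℝ) (g : ℕ → ℝ → ℝ) (hg : ∀ n, ContDiffOn ℝ 1 (g n) (Ioo α β))
    (lam : ℕ → ℝ) (hlampos : ∀ n, 0 < lam n) (hlam : Tendsto lam atTop atTop)
    (A₁ A₂ A₃ : ℝ) (hA₁ : 0 < A₁) (hA₂ : 0 < A₂) (hA₃ : 0 < A₃)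
    (hbd : ∀ n, ∀ x ∈ Ioo α β,
      A₁ ≤ lam n * |g n x - x| ∧ lam n * |g n x - x| ≤ A₂ ∧
      lam n * |deriv (fun y => g n y - y) x| ≤ A₃) :
    ∀ c d : ℝ, α < c → c < d → d < β →
      ∃ (X : ℝ → ℝ) (φ : ℕ → ℕ), StrictMono φ ∧
        ContinuousOn X (Ioo c d) ∧ (∀ x ∈ Ioo c d, X x ≠ 0) ∧
        ∀ e f : ℝ, c < e → e ≤ f → f < d →
          ∀ t₀ : ℝ, 0 < t₀ → ∀ Φ : ℝ → ℝ → ℝ,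
            IsLocalFlowOn X (Ioo c d) Φ (Icc e f) t₀ →
            TendstoUniformlyOn
              (fun n x => (g (φ n))^[⌊lam (φ n) * t₀⌋₊] x)
              (fun x => Φ t₀ x) atTop (Icc e f) := by
  intro c d hc hcd hd
  -- auxiliary interval
  set c' : ℝ := (α + c) / 2 with hc'def
  set d' : ℝ := (d + β) / 2 with hd'def
  have hαc' : α < c' := by simp only [hc'def]; linarith
  have hc'c : c' < c := by simp only [hc'def]; linarith
  have hdd' : d < d' := by simp only [hd'def]; linarith
  have hd'β : d' < β := by simp only [hd'def]; linarith
  have hc'd' : c' ≤ d' := by linarith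
  have hKsub : Icc c' d' ⊆ Ioo α β := fun x hx => ⟨lt_of_lt_of_le hαc' hx.1, lt_of_le_of_lt hx.2 hd'β⟩
  -- the rescaled displacement functions
  set fn : ℕ → ℝ → ℝ := fun n x => lam n * (g n x - x) with hfndef
  have hfn_bd : ∀ n, ∀ x ∈ Ioo α β, |fn n x| ≤ A₂ := by
    intro n x hx
    have := (hbd n x hx).2.1
    rwa [hfndef, abs_mul, abs_of_pos (hlampos n)]
  have hfn_lb : ∀ n, ∀ x ∈ Ioo α β, A₁ ≤ |fn n x| := by
    intro n x hx
    have := (hbd n x hx).1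
    rwa [hfndef, abs_mul, abs_of_pos (hlampos n)]
  -- derivative control
  have hder : ∀ n, ∀ x ∈ Ioo α β, HasDerivAt (fn n) (lam n * (deriv (g n) x - 1)) x ∧
      |lam n * (deriv (g n) x - 1)| ≤ A₃ := by
    intro n x hx
    have hgd : DifferentiableAt ℝ (g n) x :=
      (((hg n).differentiableOn one_ne_zero).differentiableAt (isOpen_Ioo.mem_nhds hx))
    have h1 : HasDerivAt (fun y => g n y - y) (deriv (g n) x - 1) x :=
      hgd.hasDerivAt.sub (hasDerivAt_id x)
    constructor
    · exact h1.const_mul (lam n)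
    · have h2 := (hbd n x hx).2.2
      rw [h1.deriv] at h2
      rwa [abs_mul, abs_of_pos (hlampos n)]
  -- Lipschitz control on fn
  have hfn_lip : ∀ n, ∀ x ∈ Ioo α β, ∀ y ∈ Ioo α β, |fn n x - fn n y| ≤ A₃ * |x - y| := by
    intro n x hx y hy
    have := Convex.norm_image_sub_le_of_norm_hasDerivWithin_le
      (f := fn n) (f' := fun x => lam n * (deriv (g n) x - 1)) (s := Ioo α β)
      (fun z hz => ((hder n z hz).1).hasDerivWithinAt)
      (fun z hz => by rw [Real.norm_eq_abs]; exact (hder n z hz).2)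
      (convex_Ioo α β) hy hx
    simpa [Real.norm_eq_abs] using this
  -- as bounded continuous functions on Icc c' d'
  have hfn_cont : ∀ n, Continuous fun x : Icc c' d' => fn n x := by
    intro n
    have : ContinuousOn (fn n) (Icc c' d') :=
      (continuousOn_const.mul (((hg n).continuousOn.mono hKsub).sub continuousOn_id))
    exact this.restrict
  haveI : CompactSpace (Icc c' d') := isCompact_iff_compactSpace.1 isCompact_Icc
  set Fc : ℕ → (Icc c' d' →ᵇ ℝ) := fun n =>
    BoundedContinuousFunction.mkOfCompact ⟨fun x : Icc c' d' => fn n x, hfn_cont n⟩ with hFcdef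
  -- compactness via Arzelà–Ascoli
  have hcomp : IsCompact (closure (Set.range Fc)) := by
    apply BoundedContinuousFunction.arzela_ascoli (Metric.closedBall (0:ℝ) A₂)
      (isCompact_closedBall 0 A₂)
    · rintro h x ⟨n, rfl⟩
      simp only [Metric.mem_closedBall, dist_zero_right, Real.norm_eq_abs]
      exact hfn_bd n x (hKsub x.2)
    · apply Metric.equicontinuous_of_continuity_modulus (fun r => A₃ * r)
      · have : Continuous fun r : ℝ => A₃ * r := continuous_const.mul continuous_id
        simpa using (this.tendsto 0)
      · rintro x y ⟨h, n, rfl⟩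
        simp only [Real.dist_eq, Subtype.dist_eq]
        exact hfn_lip n x (hKsub x.2) y (hKsub y.2)
  obtain ⟨F, _, φ, hφ, hconv⟩ := hcomp.tendsto_subseq (fun n => subset_closure ⟨n, rfl⟩)
  -- the limit vector field
  set X : ℝ → ℝ := fun x => F (projIcc c' d' hc'd' x) with hXdef
  have hXeq : ∀ x (hx : x ∈ Icc c' d'), X x = F ⟨x, hx⟩ := by
    intro x hx; simp [hXdef, projIcc_of_mem hc'd' hx]
  -- pointwise limits on Icc c' d'
  have hptlim : ∀ y : Icc c' d', Tendsto (fun n => fn (φ n) y) atTop (𝓝 (F y)) := by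
    intro y
    have : Tendsto (fun n => (Fc ∘ φ) n y) atTop (𝓝 (F y)) := by
      have hcy : Continuous fun h : Icc c' d' →ᵇ ℝ => h y :=
        continuous_eval_const y
      exact (hcy.tendsto F).comp hconv
    simpa [hFcdef] using this
  have hFub : ∀ y : Icc c' d', |F y| ≤ A₂ := by
    intro y
    exact le_of_tendsto ((continuous_abs.tendsto _).comp (hptlim y))
      (Eventually.of_forall fun n => hfn_bd _ y (hKsub y.2))
  have hFlb : ∀ y : Icc c' d', A₁ ≤ |F y| := by
    intro y
    exact ge_of_tendsto ((continuous_abs.tendsto _).comp (hptlim y))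
      (Eventually.of_forall fun n => hfn_lb _ y (hKsub y.2))
  have hFlip : ∀ y z : Icc c' d', |F y - F z| ≤ A₃ * |(y:ℝ) - z| := by
    intro y z
    have h1 : Tendsto (fun n => |fn (φ n) y - fn (φ n) z|) atTop (𝓝 |F y - F z|) :=
      (continuous_abs.tendsto _).comp ((hptlim y).sub (hptlim z))
    exact le_of_tendsto h1
      (Eventually.of_forall fun n => hfn_lip _ y (hKsub y.2) z (hKsub z.2))
  -- global properties of X
  have hXub : ∀ x : ℝ, |X x| ≤ A₂ := fun x => hFub _
  have hXlip : ∀ x y : ℝ, |X x - X y| ≤ A₃ * |x - y| := by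
    intro x y
    refine (hFlip _ _).trans ?_
    have h1 := (LipschitzWith.projIcc hc'd').dist_le_mul x y
    simp only [NNReal.coe_one, one_mul, Subtype.dist_eq, Real.dist_eq] at h1
    nlinarith [abs_nonneg (x - y)]
  have hXcont : Continuous X :=
    F.continuous.comp (LipschitzWith.projIcc hc'd').continuous
  -- sup distance
  set δ : ℕ → ℝ := fun n => dist (Fc (φ n)) F with hδdef
  have hδ0 : Tendsto δ atTop (𝓝 0) := by
    have := (tendsto_iff_dist_tendsto_zero).1 hconv
    simpa [hδdef, Function.comp] using this
  have hδpt : ∀ n, ∀ x (hx : x ∈ Icc c' d'), |fn (φ n) x - X x| ≤ δ n := by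
    intro n x hx
    have := BoundedContinuousFunction.dist_coe_le_dist (f := Fc (φ n)) (g := F) ⟨x, hx⟩
    rw [hXeq x hx]
    simpa [hFcdef, Real.dist_eq] using this
  have hlamφ : Tendsto (fun n => lam (φ n)) atTop atTop := hlam.comp hφ.tendsto_atTop
  refine ⟨X, φ, hφ, hXcont.continuousOn, ?_, ?_⟩
  · intro x hx
    have hx' : x ∈ Icc c' d' := ⟨le_of_lt (lt_of_lt_of_le hc'c hx.1.le), (hx.2.le.trans hdd'.le)⟩
    intro h0
    rw [hXeq x hx'] at h0
    have hlb := hFlb ⟨x, hx'⟩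
    rw [h0] at hlb
    simp only [abs_zero] at hlb
    linarith
  intro e f he hef hf t₀ ht₀ Φ hΦ
  obtain ⟨hΦ0, hΦd⟩ := hΦ
  -- Lipschitz estimate for the flow in time
  have hΦlip : ∀ x ∈ Icc e f, ∀ s ∈ Icc (0:ℝ) t₀, ∀ t ∈ Icc (0:ℝ) t₀,
      |Φ t x - Φ s x| ≤ A₂ * |t - s| := by
    intro x hx s hs t ht
    have := Convex.norm_image_sub_le_of_norm_hasDerivWithin_le
      (f := fun s => Φ s x) (f' := fun t => X (Φ t x)) (s := Icc (0:ℝ) t₀)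
      (fun u hu => (hΦd x hx u hu).2)
      (fun u hu => by rw [Real.norm_eq_abs]; exact hXub _)
      (convex_Icc _ _) hs ht
    simpa [Real.norm_eq_abs] using this
  -- one-step Euler estimate for the flow
  have hΦstep : ∀ x ∈ Icc e f, ∀ t u : ℝ, 0 ≤ t → t ≤ u → u ≤ t₀ →
      |Φ u x - Φ t x - (u - t) * X (Φ t x)| ≤ A₂ * A₃ * ((u - t) * (u - t)) := by
    intro x hx t u h0t htu hu
    have hsub : Icc t u ⊆ Icc (0:ℝ) t₀ := Icc_subset_Icc h0t hu
    have key := Convex.norm_image_sub_le_of_norm_hasDerivWithin_le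
      (f := fun s => Φ s x - s * X (Φ t x)) (f' := fun s => X (Φ s x) - X (Φ t x))
      (s := Icc t u) (C := A₂ * A₃ * (u - t))
      (fun s hs => by
        have h1 := (((hΦd x hx s (hsub hs)).2).mono hsub).sub
          ((hasDerivWithinAt_id s (Icc t u)).mul_const (X (Φ t x)))
        exact h1.congr_deriv (by ring))
      (fun s hs => by
        rw [Real.norm_eq_abs]
        have hb1 : |X (Φ s x) - X (Φ t x)| ≤ A₃ * |Φ s x - Φ t x| := hXlip _ _
        have hb2 : |Φ s x - Φ t x| ≤ A₂ * |s - t| :=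
          hΦlip x hx t ⟨h0t, htu.trans hu⟩ s ⟨h0t.trans hs.1, hs.2.trans hu⟩
        have hb3 : |s - t| ≤ u - t := by
          rw [abs_of_nonneg (by linarith [hs.1] : (0:ℝ) ≤ s - t)]; linarith [hs.2]
        have h0 : (0:ℝ) ≤ u - t := by linarith
        show |X (Φ s x) - X (Φ t x)| ≤ A₂ * A₃ * (u - t)
        calc |X (Φ s x) - X (Φ t x)| ≤ A₃ * |Φ s x - Φ t x| := hb1
          _ ≤ A₃ * (A₂ * |s - t|) := mul_le_mul_of_nonneg_left hb2 hA₃.le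
          _ = A₂ * A₃ * |s - t| := by ring
          _ ≤ A₂ * A₃ * (u - t) := mul_le_mul_of_nonneg_left hb3 (by positivity))
      (convex_Icc t u) (left_mem_Icc.2 htu) (right_mem_Icc.2 htu)
    have key2 : |Φ u x - u * X (Φ t x) - (Φ t x - t * X (Φ t x))|
        ≤ A₂ * A₃ * (u - t) * |u - t| := by
      simpa [Real.norm_eq_abs] using key
    rw [abs_of_nonneg (by linarith : (0:ℝ) ≤ u - t)] at key2
    have heq : Φ u x - Φ t x - (u - t) * X (Φ t x)
        = Φ u x - u * X (Φ t x) - (Φ t x - t * X (Φ t x)) := by ring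
    rw [heq]
    exact key2.trans_eq (by ring)
  -- constants
  set L : ℕ → ℝ := fun n => lam (φ n) with hLdef
  have hL : ∀ n, 0 < L n := fun n => hlampos (φ n)
  set C : ℕ → ℝ := fun n => δ n + A₂ * A₃ / L n with hCdef
  have hCnn : ∀ n, 0 ≤ C n := fun n =>
    add_nonneg dist_nonneg (div_nonneg (by positivity) (hL n).le)
  set E : ℕ → ℝ := fun n => C n * t₀ * Real.exp (A₃ * t₀) with hEdef
  have hC0 : Tendsto C atTop (𝓝 0) := by
    have h1 : Tendsto (fun n => A₂ * A₃ / L n) atTop (𝓝 0) :=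
      Tendsto.div_atTop tendsto_const_nhds hlamφ
    simpa using hδ0.add h1
  have hE0 : Tendsto E atTop (𝓝 0) := by
    have := (hC0.mul_const t₀).mul_const (Real.exp (A₃ * t₀))
    simpa [hEdef] using this
  -- a priori bound on the inductive quantity
  have hEb : ∀ n k, k ≤ ⌊L n * t₀⌋₊ → C n * k / L n * (1 + A₃ / L n) ^ k ≤ E n := by
    intro n k hk
    have hLn := hL n
    have hkL : (k:ℝ) ≤ L n * t₀ :=
      le_trans (Nat.cast_le.2 hk) (Nat.floor_le (by positivity))
    have h1 : (k:ℝ) / L n ≤ t₀ := by rw [div_le_iff₀ hLn]; linarith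
    have h2 : (1 + A₃ / L n) ^ k ≤ Real.exp (A₃ * t₀) := by
      have h3 : (1 + A₃ / L n) ≤ Real.exp (A₃ / L n) := by
        have := Real.add_one_le_exp (A₃ / L n); linarith
      calc (1 + A₃ / L n) ^ k ≤ (Real.exp (A₃ / L n)) ^ k := by
            apply pow_le_pow_left₀ (by positivity) h3
        _ = Real.exp ((k:ℝ) * (A₃ / L n)) := by rw [← Real.exp_nat_mul]
        _ ≤ Real.exp (A₃ * t₀) := by
            apply Real.exp_le_exp.2
            have heq : (k:ℝ) * (A₃ / L n) = A₃ * ((k:ℝ) / L n) := by ring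
            rw [heq]
            exact mul_le_mul_of_nonneg_left h1 hA₃.le
    have h4 : (0:ℝ) ≤ (k:ℝ) / L n := by positivity
    have h5 : (0:ℝ) ≤ (1 + A₃ / L n) ^ k := by positivity
    have h6 : C n * ((k:ℝ) / L n) * (1 + A₃ / L n) ^ k ≤ C n * t₀ * Real.exp (A₃ * t₀) := by
      have hCk : C n * ((k:ℝ) / L n) ≤ C n * t₀ := mul_le_mul_of_nonneg_left h1 (hCnn n)
      have hCknn : 0 ≤ C n * ((k:ℝ) / L n) := mul_nonneg (hCnn n) h4
      calc C n * ((k:ℝ) / L n) * (1 + A₃ / L n) ^ k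
          ≤ C n * ((k:ℝ) / L n) * Real.exp (A₃ * t₀) := by
            apply mul_le_mul_of_nonneg_left h2 hCknn
        _ ≤ C n * t₀ * Real.exp (A₃ * t₀) := by
            apply mul_le_mul_of_nonneg_right hCk (Real.exp_pos _).le
    calc C n * (k:ℝ) / L n * (1 + A₃ / L n) ^ k
        = C n * ((k:ℝ) / L n) * (1 + A₃ / L n) ^ k := by ring
      _ ≤ E n := h6
  -- the main inductive estimate
  have ind : ∀ n, E n ≤ min (c - c') (d' - d) → ∀ x ∈ Icc e f, ∀ k, k ≤ ⌊L n * t₀⌋₊ →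
      |(g (φ n))^[k] x - Φ ((k:ℝ) / L n) x| ≤ C n * k / L n * (1 + A₃ / L n) ^ k := by
    intro n hEn x hx k
    induction k with
    | zero =>
      intro _
      simp [hΦ0 x hx]
    | succ k ih =>
      intro hk1
      have hLn := hL n
      have hk : k ≤ ⌊L n * t₀⌋₊ := Nat.le_of_succ_le hk1
      have hk1L : ((k:ℝ) + 1) ≤ L n * t₀ := by
        have := le_trans (Nat.cast_le.2 hk1 : ((k+1:ℕ):ℝ) ≤ (⌊L n * t₀⌋₊:ℝ))
          (Nat.floor_le (by positivity))
        push_cast at this; linarith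
      have hkt : (k:ℝ) / L n ∈ Icc (0:ℝ) t₀ := by
        constructor
        · positivity
        · rw [div_le_iff₀ hLn]; push_cast; nlinarith
      have hk1t : ((k:ℝ) + 1) / L n ∈ Icc (0:ℝ) t₀ := by
        constructor
        · positivity
        · rw [div_le_iff₀ hLn]; nlinarith
      have ek := ih hk
      have ekE : |(g (φ n))^[k] x - Φ ((k:ℝ) / L n) x| ≤ E n := ek.trans (hEb n k hk)
      have hz : Φ ((k:ℝ) / L n) x ∈ Ioo c d := (hΦd x hx _ hkt).1
      -- the iterate stays in the auxiliary interval
      have hyK : (g (φ n))^[k] x ∈ Icc c' d' := by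
        have h1 := (abs_le.1 ekE).1
        have h2 := (abs_le.1 ekE).2
        have m1 := min_le_left (c - c') (d' - d)
        have m2 := min_le_right (c - c') (d' - d)
        exact ⟨by linarith [hz.1], by linarith [hz.2]⟩
      have hyIoo : (g (φ n))^[k] x ∈ Ioo α β := hKsub hyK
      -- step identity for g
      have hgy : g (φ n) ((g (φ n))^[k] x)
          = (g (φ n))^[k] x + fn (φ n) ((g (φ n))^[k] x) / L n := by
        simp only [hfndef, hLdef]
        field_simp [(hlampos (φ n)).ne']
        ring
      -- one-step flow estimate
      have hus : ((k:ℝ) + 1) / L n - (k:ℝ) / L n = 1 / L n := by ring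
      have hstep := hΦstep x hx ((k:ℝ) / L n) (((k:ℝ) + 1) / L n) hkt.1
        (by rw [div_le_div_iff₀ hLn hLn]; nlinarith) hk1t.2
      rw [hus] at hstep
      -- error decomposition
      have d1 : |fn (φ n) ((g (φ n))^[k] x) - X ((g (φ n))^[k] x)| ≤ δ n :=
        hδpt n _ hyK
      have d2 : |X ((g (φ n))^[k] x) - X (Φ ((k:ℝ) / L n) x)|
          ≤ A₃ * |(g (φ n))^[k] x - Φ ((k:ℝ) / L n) x| := hXlip _ _
      have d3 : |Φ ((k:ℝ) / L n) x + (1 / L n) * X (Φ ((k:ℝ) / L n) x)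
          - Φ (((k:ℝ) + 1) / L n) x| ≤ A₂ * A₃ * (1 / L n * (1 / L n)) := by
        have heq : Φ ((k:ℝ) / L n) x + (1 / L n) * X (Φ ((k:ℝ) / L n) x)
            - Φ (((k:ℝ) + 1) / L n) x
            = -(Φ (((k:ℝ) + 1) / L n) x - Φ ((k:ℝ) / L n) x
              - (1 / L n) * X (Φ ((k:ℝ) / L n) x)) := by ring
        rw [heq, abs_neg]
        exact hstep
      -- combine
      have tri : |(g (φ n))^[k+1] x - Φ (((k+1:ℕ):ℝ) / L n) x|
          ≤ |(g (φ n))^[k] x - Φ ((k:ℝ) / L n) x|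
            + (|(fn (φ n) ((g (φ n))^[k] x) - X ((g (φ n))^[k] x)) / L n|
            + (|(X ((g (φ n))^[k] x) - X (Φ ((k:ℝ) / L n) x)) / L n|
            + |Φ ((k:ℝ) / L n) x + (1 / L n) * X (Φ ((k:ℝ) / L n) x)
                - Φ (((k:ℝ) + 1) / L n) x|)) := by
        have hdec : (g (φ n))^[k+1] x - Φ (((k+1:ℕ):ℝ) / L n) x
            = ((g (φ n))^[k] x - Φ ((k:ℝ) / L n) x)
              + ((fn (φ n) ((g (φ n))^[k] x) - X ((g (φ n))^[k] x)) / L n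
              + ((X ((g (φ n))^[k] x) - X (Φ ((k:ℝ) / L n) x)) / L n
              + (Φ ((k:ℝ) / L n) x + (1 / L n) * X (Φ ((k:ℝ) / L n) x)
                  - Φ (((k:ℝ) + 1) / L n) x))) := by
          rw [Function.iterate_succ_apply', hgy]
          push_cast
          field_simp
          ring
        rw [hdec]
        exact (abs_add_le _ _).trans (add_le_add_right
          ((abs_add_le _ _).trans (add_le_add_right (abs_add_le _ _) _)) _)
      -- numeric conclusion
      have hP : (1:ℝ) ≤ 1 + A₃ / L n := by
        have := div_nonneg hA₃.le (hL n).le; linarith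
      have hPk : (1:ℝ) ≤ (1 + A₃ / L n) ^ k := one_le_pow₀ hP
      have habs : 0 ≤ |(g (φ n))^[k] x - Φ ((k:ℝ) / L n) x| := abs_nonneg _
      have hfin : |(g (φ n))^[k+1] x - Φ (((k+1:ℕ):ℝ) / L n) x|
          ≤ (1 + A₃ / L n) * |(g (φ n))^[k] x - Φ ((k:ℝ) / L n) x| + C n / L n := by
        refine tri.trans ?_
        have hd1 : |(fn (φ n) ((g (φ n))^[k] x) - X ((g (φ n))^[k] x)) / L n| ≤ δ n / L n := by
          rw [abs_div, abs_of_pos hLn]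
          gcongr
        have hd2 : |(X ((g (φ n))^[k] x) - X (Φ ((k:ℝ) / L n) x)) / L n|
            ≤ A₃ * |(g (φ n))^[k] x - Φ ((k:ℝ) / L n) x| / L n := by
          rw [abs_div, abs_of_pos hLn]
          gcongr
        have hCL : C n / L n = δ n / L n + A₂ * A₃ / (L n * L n) := by
          simp only [hCdef]
          field_simp
        have hd3 := d3
        rw [hCL]
        have heq3 : A₂ * A₃ * (1 / L n * (1 / L n)) = A₂ * A₃ / (L n * L n) := by
          field_simp
        rw [heq3] at hd3
        have heq4 : (1 + A₃ / L n) * |(g (φ n))^[k] x - Φ ((k:ℝ) / L n) x|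
            = |(g (φ n))^[k] x - Φ ((k:ℝ) / L n) x|
              + A₃ * |(g (φ n))^[k] x - Φ ((k:ℝ) / L n) x| / L n := by ring
        linarith [hd1, hd2, hd3]
      refine hfin.trans ?_
      have step1 : (1 + A₃ / L n) * |(g (φ n))^[k] x - Φ ((k:ℝ) / L n) x|
          ≤ (1 + A₃ / L n) * (C n * k / L n * (1 + A₃ / L n) ^ k) := by
        apply mul_le_mul_of_nonneg_left ek (by positivity)
      have step2 : C n / L n ≤ C n / L n * (1 + A₃ / L n) ^ (k+1) := by
        nlinarith [hCnn n, div_nonneg (hCnn n) hLn.le,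
          one_le_pow₀ hP (n := k+1)]
      push_cast
      calc (1 + A₃ / L n) * |(g (φ n))^[k] x - Φ ((k:ℝ) / L n) x| + C n / L n
          ≤ (1 + A₃ / L n) * (C n * k / L n * (1 + A₃ / L n) ^ k)
            + C n / L n * (1 + A₃ / L n) ^ (k+1) := by
            linarith [step1, step2]
        _ = C n * ((k:ℝ) + 1) / L n * (1 + A₃ / L n) ^ (k+1) := by ring
  -- conclusion: uniform convergence
  rw [Metric.tendstoUniformlyOn_iff]
  intro ε hε
  have gap_pos : 0 < min (c - c') (d' - d) := lt_min (by linarith) (by linarith)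
  have h1 : ∀ᶠ n in atTop, E n ≤ min (c - c') (d' - d) :=
    hE0.eventually (eventually_le_nhds gap_pos)
  have h2 : ∀ᶠ n in atTop, E n + A₂ / L n < ε := by
    have : Tendsto (fun n => E n + A₂ / L n) atTop (𝓝 0) := by
      have hA2 : Tendsto (fun n => A₂ / L n) atTop (𝓝 0) :=
        Tendsto.div_atTop tendsto_const_nhds hlamφ
      simpa using hE0.add hA2
    exact this.eventually (eventually_lt_nhds hε)
  filter_upwards [h1, h2] with n hEn hεn
  intro x hx
  have hLn := hL n
  have hmain := (ind n hEn x hx ⌊L n * t₀⌋₊ le_rfl).trans (hEb n _ le_rfl)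
  have hKt : (⌊L n * t₀⌋₊ : ℝ) / L n ∈ Icc (0:ℝ) t₀ := by
    constructor
    · positivity
    · rw [div_le_iff₀ hLn]
      have := Nat.floor_le (show (0:ℝ) ≤ L n * t₀ by positivity)
      linarith
  have htail : |Φ t₀ x - Φ ((⌊L n * t₀⌋₊ : ℝ) / L n) x| ≤ A₂ / L n := by
    have := hΦlip x hx ((⌊L n * t₀⌋₊ : ℝ) / L n) hKt t₀ ⟨ht₀.le, le_rfl⟩
    have hlt : t₀ - (⌊L n * t₀⌋₊ : ℝ) / L n ≤ 1 / L n := by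
      rw [sub_le_iff_le_add, ← add_div, le_div_iff₀ hLn]
      have := Nat.lt_floor_add_one (L n * t₀)
      nlinarith
    have habs : |t₀ - (⌊L n * t₀⌋₊ : ℝ) / L n| = t₀ - (⌊L n * t₀⌋₊ : ℝ) / L n :=
      abs_of_nonneg (by linarith [hKt.2])
    calc |Φ t₀ x - Φ ((⌊L n * t₀⌋₊ : ℝ) / L n) x|
        ≤ A₂ * |t₀ - (⌊L n * t₀⌋₊ : ℝ) / L n| := this
      _ ≤ A₂ * (1 / L n) := by rw [habs]; nlinarith
      _ = A₂ / L n := by ring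
  rw [Real.dist_eq]
  calc |Φ t₀ x - (g (φ n))^[⌊lam (φ n) * t₀⌋₊] x|
      ≤ |Φ t₀ x - Φ ((⌊L n * t₀⌋₊ : ℝ) / L n) x|
        + |Φ ((⌊L n * t₀⌋₊ : ℝ) / L n) x - (g (φ n))^[⌊L n * t₀⌋₊] x| := abs_sub_le _ _ _
    _ ≤ A₂ / L n + E n := by
        rw [abs_sub_comm (Φ ((⌊L n * t₀⌋₊ : ℝ) / L n) x)]
        exact add_le_add htail hmain
    _ < ε := by linarith


end
end

section
/- Let 0 < λ < 1, let j ≥ 1 be an integer, and let δ₁ > 0. Let g be a real analytic function on an open interval I₁ ⊂ ℝ containing [0, δ₁] such that g(0) = 0, (g − id) and its first j derivatives vanish at 0, and g^{(j+1)}(y) < 0 for every y ∈ [0, δ₁]. Put M₁ = sup_{y∈[0,δ₁]} |g^{(j+1)}(y)|, M₂ = inf_{y∈[0,δ₁]} |g^{(j+1)}(y)|, choose 0 < δ₂ < δ₁ and let I = ]δ₂, δ₁[. For n ≥ 1 define gₙ(x) = λ^{−n} g(λⁿ x). Then for every n ≥ 1 and every x ∈ I: (δ₂^{j+1}/(j+1)!)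 M₂ ≤ λ^{−jn} |(gₙ − id)(x)| ≤ (δ₁^{j+1}/(j+1)!) M₁, and λ^{−jn} |(gₙ − id)′(x)| ≤ (δ₁^j/j!) M₁. -/
open Filter Topology Set MeasureTheory Classical

noncomputable section

/-- Iterated derivatives of an analytic function are analytic. -/
private lemma analyticOnNhd_iteratedDeriv' {f : ℝ → ℝ} {u : Set ℝ}
    (hf : AnalyticOnNhd ℝ f u) : ∀ n : ℕ, AnalyticOnNhd ℝ (iteratedDeriv n f) u := by
  intro n
  induction n with
  | zero => simpa [iteratedDeriv_zero] using hf
  | succ n ih => rw [iteratedDeriv_succ]; exact ih.deriv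

private lemma iteratedDerivWithin_of_isOpen' {f : ℝ → ℝ} {u : Set ℝ} (hu : IsOpen u)
    (n : ℕ) {x : ℝ} (hx : x ∈ u) :
    iteratedDerivWithin n f u x = iteratedDeriv n f x := by
  rw [iteratedDerivWithin_eq_iteratedFDerivWithin, iteratedFDerivWithin_of_isOpen n hu hx,
    iteratedDeriv_eq_iteratedFDeriv]

private lemma iteratedDerivWithin_Icc_eq' {f : ℝ → ℝ} {u : Set ℝ}
    (hf : AnalyticOnNhd ℝ f u) {a b : ℝ} (hab : a < b) (hsub : Icc a b ⊆ u) :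
    ∀ (n : ℕ) {x : ℝ}, x ∈ Icc a b → iteratedDerivWithin n f (Icc a b) x = iteratedDeriv n f x := by
  intro n
  induction n with
  | zero => intro x _; simp
  | succ n ih =>
    intro x hx
    have hud := uniqueDiffOn_Icc hab
    rw [iteratedDerivWithin_succ, iteratedDeriv_succ]
    rw [derivWithin_congr (fun y hy => ih hy) (ih hx)]
    exact ((analyticOnNhd_iteratedDeriv' hf n x (hsub hx)).differentiableAt).derivWithin
      (hud x hx)

/-- Taylor with Lagrange remainder for an analytic function whose derivatives up to order `k`
vanish at `0`. -/
private lemma taylor_vanish_remainder {f : ℝ → ℝ} {u : Set ℝ} (hu : IsOpen u)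
    (hf : AnalyticOnNhd ℝ f u) {y : ℝ} (hy : 0 < y) (hsub : Icc 0 y ⊆ u)
    (k : ℕ) (hvan : ∀ m : ℕ, m ≤ k → iteratedDeriv m f 0 = 0) :
    ∃ ξ ∈ Ioo 0 y, f y = iteratedDeriv (k + 1) f ξ * y ^ (k + 1) / ((k + 1).factorial : ℝ) := by
  have hfu : AnalyticOnNhd ℝ f (Icc 0 y) := hf.mono hsub
  have hcd : ContDiffOn ℝ k f (Icc 0 y) := hfu.contDiffOn (uniqueDiffOn_Icc hy)
  have hdiff : DifferentiableOn ℝ (iteratedDerivWithin k f (Icc 0 y)) (Ioo 0 y) := by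
    intro z hz
    refine ((analyticOnNhd_iteratedDeriv' hf k z
      (hsub (Ioo_subset_Icc_self hz))).differentiableAt.differentiableWithinAt).congr
      (fun w hw => ?_) ?_
    · exact iteratedDerivWithin_Icc_eq' hf hy hsub k (Ioo_subset_Icc_self hw)
    · exact iteratedDerivWithin_Icc_eq' hf hy hsub k (Ioo_subset_Icc_self hz)
  obtain ⟨ξ, hξ, heq⟩ := taylor_mean_remainder_lagrange (x₀ := 0) (x := y) hy.ne
    (by rwa [uIcc_of_le hy.le]) (by rwa [uIcc_of_le hy.le, uIoo_of_le hy.le])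
  rw [uIcc_of_le hy.le] at heq
  rw [uIoo_of_le hy.le] at hξ
  refine ⟨ξ, hξ, ?_⟩
  have htaylor : taylorWithinEval f k (Icc 0 y) 0 y = 0 := by
    rw [taylor_within_apply]
    refine Finset.sum_eq_zero fun m hm => ?_
    rw [iteratedDerivWithin_Icc_eq' hf hy hsub m (left_mem_Icc.2 hy.le),
      hvan m (Nat.lt_succ_iff.mp (Finset.mem_range.mp hm))]
    simp
  rw [htaylor, sub_zero] at heq
  rw [heq, iteratedDerivWithin_Icc_eq' hf hy hsub (k + 1) (Ioo_subset_Icc_self hξ), sub_zero]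

private lemma iteratedDeriv_const_zero' : ∀ (k : ℕ) (c x : ℝ),
    iteratedDeriv (k + 1) (fun _ : ℝ => c) x = 0 := by
  intro k
  induction k with
  | zero => intro c x; simp [iteratedDeriv_one]
  | succ k ih =>
    intro c x
    rw [iteratedDeriv_succ']
    simpa using ih 0 x


/-- (Lemma 3.8 of the paper.) Estimates for the conjugates
`gₙ(x) = λ⁻ⁿ g(λⁿ x)` of `g` by the contraction `f(x) = λ x`, where `g - id` vanishes to
order `j` at `0` and `g^{(j+1)} < 0` on `[0, δ₁]`. -/
theorem conjugate_estimates
    (lam : ℝ) (hlam0 : 0 < lam) (hlam1 : lam < 1)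
    (j : ℕ) (hj : 1 ≤ j)
    (δ₁ δ₂ : ℝ) (hδ₂ : 0 < δ₂) (hδ : δ₂ < δ₁)
    (α β : ℝ) (hI : Icc (0 : ℝ) δ₁ ⊆ Ioo α β)
    (g : ℝ → ℝ) (hg : AnalyticOnNhd ℝ g (Ioo α β)) (hg0 : g 0 = 0)
    (hvanish : ∀ m : ℕ, m ≤ j → iteratedDeriv m (fun x => g x - x) 0 = 0)
    (hneg : ∀ y ∈ Icc (0 : ℝ) δ₁, iteratedDeriv (j + 1) g y < 0) :
    ∀ n : ℕ, 1 ≤ n → ∀ x ∈ Ioo δ₂ δ₁,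
      (δ₂ ^ (j + 1) / ((j + 1).factorial : ℝ)) *
          sInf ((fun y => |iteratedDeriv (j + 1) g y|) '' Icc (0 : ℝ) δ₁)
        ≤ (lam ^ (j * n))⁻¹ * |(lam ^ n)⁻¹ * g (lam ^ n * x) - x| ∧
      (lam ^ (j * n))⁻¹ * |(lam ^ n)⁻¹ * g (lam ^ n * x) - x|
        ≤ (δ₁ ^ (j + 1) / ((j + 1).factorial : ℝ)) *
          sSup ((fun y => |iteratedDeriv (j + 1) g y|) '' Icc (0 : ℝ) δ₁) ∧
      (lam ^ (j * n))⁻¹ * |deriv (fun y => (lam ^ n)⁻¹ * g (lam ^ n * y) - y) x|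
        ≤ (δ₁ ^ j / (j.factorial : ℝ)) *
          sSup ((fun y => |iteratedDeriv (j + 1) g y|) '' Icc (0 : ℝ) δ₁) := by
  obtain ⟨p, rfl⟩ : ∃ p, j = p + 1 := ⟨j - 1, (Nat.succ_pred_eq_of_pos hj).symm⟩
  intro n hn x hx
  obtain ⟨hx1, hx2⟩ := hx
  have hδ₁ : 0 < δ₁ := hδ₂.trans hδ
  have hx0 : 0 < x := hδ₂.trans hx1
  have hu : IsOpen (Ioo α β) := isOpen_Ioo
  set h : ℝ → ℝ := fun z => g z - z with hh_def
  have hh : AnalyticOnNhd ℝ h (Ioo α β) := hg.sub analyticOnNhd_id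
  set A : ℝ := lam ^ n with hA_def
  have hA : 0 < A := pow_pos hlam0 n
  have hAne : A ≠ 0 := hA.ne'
  have hA1 : A < 1 := pow_lt_one₀ hlam0.le hlam1 (by omega)
  set y : ℝ := A * x with hy_def
  have hy0 : 0 < y := mul_pos hA hx0
  have hyx : y < x := by
    calc y = A * x := rfl
    _ < 1 * x := by exact mul_lt_mul_of_pos_right hA1 hx0
    _ = x := one_mul x
  have hyδ : y < δ₁ := hyx.trans hx2
  have hsub1 : Icc 0 y ⊆ Ioo α β := (Icc_subset_Icc_right hyδ.le).trans hI
  -- the (j+1)-st derivatives of `h` and `g` agree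
  have hsame : ∀ z ∈ Ioo α β, iteratedDeriv (p + 1 + 1) h z = iteratedDeriv (p + 1 + 1) g z := by
    intro z hz
    have hgc : ContDiffOn ℝ (p + 1 + 1 : ℕ) g (Ioo α β) := hg.contDiffOn hu.uniqueDiffOn
    have hidz : iteratedDeriv (p + 1 + 1) (fun w : ℝ => w) z = 0 := by
      rw [iteratedDeriv_succ', deriv_id'']
      exact iteratedDeriv_const_zero' p 1 z
    have hsub' : iteratedDerivWithin (p + 1 + 1) h (Ioo α β) z =
        iteratedDerivWithin (p + 1 + 1) g (Ioo α β) z -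
          iteratedDerivWithin (p + 1 + 1) (fun w : ℝ => w) (Ioo α β) z :=
      iteratedDerivWithin_sub hz hu.uniqueDiffOn (hgc z hz) (contDiffOn_id z hz)
    rw [iteratedDerivWithin_of_isOpen' hu _ hz, iteratedDerivWithin_of_isOpen' hu _ hz,
      iteratedDerivWithin_of_isOpen' hu _ hz, hidz, sub_zero] at hsub'
    exact hsub'
  -- Taylor for h at y
  obtain ⟨ξ, hξ, hval⟩ := taylor_vanish_remainder hu hh hy0 hsub1 (p + 1) hvanish
  rw [hsame ξ (hsub1 (Ioo_subset_Icc_self hξ))] at hval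
  -- Taylor for deriv h at y
  have hvan' : ∀ m : ℕ, m ≤ p → iteratedDeriv m (deriv h) 0 = 0 := by
    intro m hm
    rw [← iteratedDeriv_succ']
    exact hvanish (m + 1) (by omega)
  obtain ⟨ξ', hξ', hval'⟩ := taylor_vanish_remainder hu hh.deriv hy0 hsub1 p hvan'
  rw [← iteratedDeriv_succ'] at hval'
  rw [hsame ξ' (hsub1 (Ioo_subset_Icc_self hξ'))] at hval'
  -- compute the derivative of the conjugate
  have hyu : y ∈ Ioo α β := hsub1 (right_mem_Icc.2 hy0.le)
  have hdh : HasDerivAt h (deriv h y) y := (hh y hyu).differentiableAt.hasDerivAt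
  have hlin : HasDerivAt (fun w : ℝ => A * w) A x := by
    simpa using (hasDerivAt_id x).const_mul A
  have hcomp : HasDerivAt (fun w : ℝ => h (A * w)) (deriv h y * A) x := hdh.comp x hlin
  have hfull : HasDerivAt (fun w : ℝ => A⁻¹ * h (A * w)) (A⁻¹ * (deriv h y * A)) x :=
    hcomp.const_mul A⁻¹
  have funeq : (fun w : ℝ => A⁻¹ * g (A * w) - w) = fun w : ℝ => A⁻¹ * h (A * w) := by
    funext w
    simp only [hh_def]
    field_simp
  have hderiv_eq : deriv (fun w : ℝ => A⁻¹ * g (A * w) - w) x = deriv h y := by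
    rw [funeq, hfull.deriv]
    field_simp
  -- abbreviations
  set F₁ : ℝ := ((p + 1 + 1).factorial : ℝ) with hF₁
  set F₂ : ℝ := ((p + 1).factorial : ℝ) with hF₂
  have hF₁0 : 0 < F₁ := by positivity
  have hF₂0 : 0 < F₂ := by positivity
  set c : ℝ := iteratedDeriv (p + 1 + 1) g ξ with hc_def
  set c' : ℝ := iteratedDeriv (p + 1 + 1) g ξ' with hc'_def
  have hpow_eq : lam ^ ((p + 1) * n) = A ^ (p + 1) := by
    rw [hA_def, ← pow_mul, mul_comm]
  -- main value computation
  have e1 : A⁻¹ * g (A * x) - x = A⁻¹ * h y := by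
    simp only [hh_def, hy_def]
    field_simp
  have e3 : |h y| = |c| * y ^ (p + 1 + 1) / F₁ := by
    rw [hval, abs_div, abs_mul, abs_of_pos (pow_pos hy0 _), abs_of_pos hF₁0]
  have E₁ : (lam ^ ((p + 1) * n))⁻¹ * |A⁻¹ * g (A * x) - x| = |c| * x ^ (p + 1 + 1) / F₁ := by
    rw [e1, abs_mul, abs_inv, abs_of_pos hA, e3, hpow_eq, hy_def, mul_pow]
    rw [pow_succ A (p + 1)]
    field_simp
  have e3' : |deriv h y| = |c'| * y ^ (p + 1) / F₂ := by
    rw [hval', abs_div, abs_mul, abs_of_pos (pow_pos hy0 _), abs_of_pos hF₂0]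
  have E₂ : (lam ^ ((p + 1) * n))⁻¹ * |deriv (fun w : ℝ => A⁻¹ * g (A * w) - w) x|
      = |c'| * x ^ (p + 1) / F₂ := by
    rw [hderiv_eq, e3', hpow_eq, hy_def, mul_pow]
    field_simp
  -- sup/inf bounds
  set K : Set ℝ := (fun y => |iteratedDeriv (p + 1 + 1) g y|) '' Icc (0 : ℝ) δ₁ with hK_def
  have hKcont : ContinuousOn (fun y => |iteratedDeriv (p + 1 + 1) g y|) (Icc (0 : ℝ) δ₁) :=
    (((analyticOnNhd_iteratedDeriv' hg (p + 1 + 1)).continuousOn).mono hI).abs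
  have hKcompact : IsCompact K := isCompact_Icc.image_of_continuousOn hKcont
  have hξmem : ξ ∈ Icc (0 : ℝ) δ₁ := ⟨hξ.1.le, (hξ.2.trans hyδ).le⟩
  have hξ'mem : ξ' ∈ Icc (0 : ℝ) δ₁ := ⟨hξ'.1.le, (hξ'.2.trans hyδ).le⟩
  have hcK : |c| ∈ K := ⟨ξ, hξmem, rfl⟩
  have hc'K : |c'| ∈ K := ⟨ξ', hξ'mem, rfl⟩
  have hinf_le : sInf K ≤ |c| := csInf_le hKcompact.bddBelow hcK
  have hle_sup : |c| ≤ sSup K := le_csSup hKcompact.bddAbove hcK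
  have hle_sup' : |c'| ≤ sSup K := le_csSup hKcompact.bddAbove hc'K
  have hinf0 : 0 ≤ sInf K := Real.sInf_nonneg fun t ht => by
    obtain ⟨w, _, rfl⟩ := ht; exact abs_nonneg _
  refine ⟨?_, ?_, ?_⟩
  · rw [E₁]
    calc δ₂ ^ (p + 1 + 1) / F₁ * sInf K ≤ x ^ (p + 1 + 1) / F₁ * |c| := by
          apply mul_le_mul ?_ hinf_le hinf0 (by positivity)
          gcongr
      _ = |c| * x ^ (p + 1 + 1) / F₁ := by ring
  · rw [E₁]
    calc |c| * x ^ (p + 1 + 1) / F₁ = x ^ (p + 1 + 1) / F₁ * |c| := by ring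
      _ ≤ δ₁ ^ (p + 1 + 1) / F₁ * sSup K := by
          apply mul_le_mul ?_ hle_sup (abs_nonneg _) (by positivity)
          gcongr
  · rw [E₂]
    calc |c'| * x ^ (p + 1) / F₂ = x ^ (p + 1) / F₂ * |c'| := by ring
      _ ≤ δ₁ ^ (p + 1) / F₂ * sSup K := by
          apply mul_le_mul ?_ hle_sup' (abs_nonneg _) (by positivity)
          gcongr

end
end

section
/- Let I₁ be an open interval in ℝ and let I₂ be an open, relatively compact subinterval of I₁. For every integer n ≥ 1 and every real ε > 0 there exists δ > 0 such that for every C¹-map h : I₁ → ℝ with ‖h − id‖_{1,I₁} < δ and every point x ∈ I₂, the iterates h(x), h²(x), …, hⁿ(x) are defined (they remain in I₁) and |(hⁿ − id)(x) − n·(h − id)(x)| ≤ ε·|(h − id)(x)|. -/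
open Filter Topology Set MeasureTheory Classical

noncomputable section

/-- (Lemma 3.10 of the paper.) For every `n ≥ 1` and `ε > 0` there is
`δ > 0` such that any `C¹`-map `h` on `I₁` with `‖h - id‖₁ < δ` has its first `n` iterates
defined on `I₂` and satisfies `|(hⁿ - id)(x) - n (h - id)(x)| ≤ ε |(h - id)(x)|` on `I₂`. -/
theorem iterate_displacement_estimate
    (α β c d : ℝ) (hcd : c < d) (hI₂ : Icc c d ⊆ Ioo α β)
    (n : ℕ) (hn : 1 ≤ n) (ε : ℝ) (hε : 0 < ε) :
    ∃ δ : ℝ, 0 < δ ∧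
      ∀ h : ℝ → ℝ, ContDiffOn ℝ 1 h (Ioo α β) →
        (∀ x ∈ Ioo α β, |h x - x| + |deriv h x - 1| < δ) →
        ∀ x ∈ Ioo c d,
          (∀ m : ℕ, m ≤ n → h^[m] x ∈ Ioo α β) ∧
          |h^[n] x - x - (n : ℝ) * (h x - x)| ≤ ε * |h x - x| := by
  have hcα : α < c := (hI₂ ⟨le_rfl, hcd.le⟩).1
  have hdβ : d < β := (hI₂ ⟨hcd.le, le_rfl⟩).2
  have hnR : (1:ℝ) ≤ n := by exact_mod_cast hn
  have hn0 : (0:ℝ) < n := lt_of_lt_of_le one_pos hnR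
  set r : ℝ := min (c - α) (β - d) with hrdef
  have hr : 0 < r := lt_min (by linarith) (by linarith)
  set δ : ℝ := min (min (r / (n + 1)) (1 / n)) (ε / (3 * n ^ 2)) with hδdef
  have hδpos : 0 < δ :=
    lt_min (lt_min (div_pos hr (by positivity)) (div_pos one_pos hn0))
      (div_pos hε (by positivity))
  have hδr : (n:ℝ) * δ < r := by
    have h1 : δ ≤ r / (n + 1) := (min_le_left _ _).trans (min_le_left _ _)
    have h2 : δ * (n + 1) ≤ r := (le_div_iff₀ (by positivity)).mp h1
    nlinarith
  have hδn1 : (n:ℝ) * δ ≤ 1 := by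
    have h1 : δ ≤ 1 / n := (min_le_left _ _).trans (min_le_right _ _)
    have h2 : δ * n ≤ 1 := (le_div_iff₀ hn0).mp h1
    linarith
  have hδε : 3 * (n:ℝ) ^ 2 * δ ≤ ε := by
    have h1 : δ ≤ ε / (3 * n ^ 2) := min_le_right _ _
    have h2 : δ * (3 * n ^ 2) ≤ ε := (le_div_iff₀ (by positivity)).mp h1
    linarith
  have hpow : (1 + δ) ^ n ≤ 3 := by
    have h1 : (1:ℝ) + δ ≤ Real.exp δ := by linarith [Real.add_one_le_exp δ]
    calc (1 + δ) ^ n ≤ (Real.exp δ) ^ n := pow_le_pow_left₀ (by linarith) h1 n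
      _ = Real.exp (n * δ) := (Real.exp_nat_mul δ n).symm
      _ ≤ Real.exp 1 := Real.exp_le_exp.2 hδn1
      _ ≤ 3 := by linarith [Real.exp_one_lt_d9]
  refine ⟨δ, hδpos, ?_⟩
  intro h hC1 hδh x hx
  have hxI : x ∈ Ioo α β := hI₂ ⟨hx.1.le, hx.2.le⟩
  have hdiff : DifferentiableOn ℝ h (Ioo α β) := hC1.differentiableOn one_ne_zero
  have hsmall : ∀ y ∈ Ioo α β, |h y - y| ≤ δ := by
    intro y hy
    have h1 := hδh y hy
    have h2 := abs_nonneg (deriv h y - 1)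
    linarith
  have hlip : ∀ y ∈ Ioo α β, ∀ z ∈ Ioo α β,
      |(h y - y) - (h z - z)| ≤ δ * |y - z| := by
    intro y hy z hz
    have hd : ∀ w ∈ Ioo α β,
        HasDerivWithinAt (fun u => h u - u) (deriv h w - 1) (Ioo α β) w := by
      intro w hw
      exact (((hdiff.differentiableAt (isOpen_Ioo.mem_nhds hw)).hasDerivAt).sub
        (hasDerivAt_id w)).hasDerivWithinAt
    have hb : ∀ w ∈ Ioo α β, ‖deriv h w - 1‖ ≤ δ := by
      intro w hw
      rw [Real.norm_eq_abs]
      have h1 := hδh w hw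
      have h2 := abs_nonneg (h w - w)
      linarith
    have := (convex_Ioo α β).norm_image_sub_le_of_norm_hasDerivWithin_le hd hb hz hy
    simpa [Real.norm_eq_abs] using this
  -- iterates stay in the interval, with displacement bound
  have mem : ∀ m : ℕ, m ≤ n → h^[m] x ∈ Ioo α β ∧ |h^[m] x - x| ≤ m * δ := by
    intro m
    induction m with
    | zero => intro _; exact ⟨hxI, by simp⟩
    | succ m ih =>
      intro hm
      obtain ⟨hmem, hdist⟩ := ih (Nat.le_of_succ_le hm)
      have hstep : |h^[m+1] x - h^[m] x| ≤ δ := by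
        rw [Function.iterate_succ_apply']
        exact hsmall _ hmem
      have hd1 : |h^[m+1] x - x| ≤ (↑(m+1) : ℝ) * δ := by
        have ht := abs_sub_le (h^[m+1] x) (h^[m] x) x
        push_cast
        linarith
      have hmn : ((m:ℝ) + 1) ≤ n := by exact_mod_cast hm
      have habs : |h^[m+1] x - x| < r := by
        have h2 : (↑(m+1) : ℝ) * δ ≤ n * δ := by
          push_cast
          nlinarith [hδpos.le]
        linarith
      have habs' := abs_lt.mp habs
      have hc1 : r ≤ c - α := min_le_left _ _
      have hc2 : r ≤ β - d := min_le_right _ _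
      refine ⟨⟨?_, ?_⟩, hd1⟩
      · have := hx.1; linarith [habs'.1]
      · have := hx.2; linarith [habs'.2]
  -- one-step control on consecutive displacements
  have ustep : ∀ m : ℕ, m + 1 ≤ n →
      |(h^[m+2] x - h^[m+1] x) - (h^[m+1] x - h^[m] x)| ≤ δ * |h^[m+1] x - h^[m] x| := by
    intro m hm
    have h1 := (mem (m+1) hm).1
    have h2 := (mem m (Nat.le_of_succ_le hm)).1
    have hl := hlip _ h1 _ h2
    rw [← Function.iterate_succ_apply' h (m+1), ← Function.iterate_succ_apply' h m] at hl
    exact hl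
  have ubound : ∀ m : ℕ, m ≤ n →
      |h^[m+1] x - h^[m] x| ≤ (1 + δ) ^ m * |h x - x| := by
    intro m
    induction m with
    | zero => intro _; simp
    | succ m ih =>
      intro hm
      have hu := ih (Nat.le_of_succ_le hm)
      have hs := ustep m hm
      have ht : |h^[m+2] x - h^[m+1] x| ≤ (1 + δ) * |h^[m+1] x - h^[m] x| := by
        have := abs_sub_abs_le_abs_sub (h^[m+2] x - h^[m+1] x) (h^[m+1] x - h^[m] x)
        linarith
      have hmul : (1 + δ) * |h^[m+1] x - h^[m] x| ≤ (1 + δ) * ((1 + δ) ^ m * |h x - x|) :=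
        mul_le_mul_of_nonneg_left hu (by linarith [hδpos.le])
      calc |h^[m+1+1] x - h^[m+1] x| ≤ (1 + δ) * ((1 + δ) ^ m * |h x - x|) := le_trans ht hmul
        _ = (1 + δ) ^ (m + 1) * |h x - x| := by ring
  have udiff : ∀ m : ℕ, m ≤ n →
      |(h^[m+1] x - h^[m] x) - (h x - x)| ≤ m * δ * ((1 + δ) ^ n * |h x - x|) := by
    intro m
    induction m with
    | zero => intro _; simp
    | succ m ih =>
      intro hm
      have hu := ih (Nat.le_of_succ_le hm)
      have hs := ustep m hm
      have hb := ubound m (Nat.le_of_succ_le hm)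
      have hpm : (1 + δ) ^ m ≤ (1 + δ) ^ n :=
        pow_le_pow_right₀ (by linarith [hδpos.le]) (Nat.le_of_succ_le hm)
      have hDnn : (0:ℝ) ≤ |h x - x| := abs_nonneg _
      have h3 : δ * |h^[m+1] x - h^[m] x| ≤ δ * ((1 + δ) ^ n * |h x - x|) := by
        have : |h^[m+1] x - h^[m] x| ≤ (1 + δ) ^ n * |h x - x| :=
          hb.trans (mul_le_mul_of_nonneg_right hpm hDnn)
        exact mul_le_mul_of_nonneg_left this hδpos.le
      have htri := abs_sub_le (h^[m+2] x - h^[m+1] x) (h^[m+1] x - h^[m] x) (h x - x)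
      push_cast
      push_cast at hu
      nlinarith
  refine ⟨fun m hm => (mem m hm).1, ?_⟩
  have tel : h^[n] x - x = ∑ m ∈ Finset.range n, (h^[m+1] x - h^[m] x) := by
    rw [Finset.sum_range_sub (fun m => h^[m] x)]
    simp
  have hsum : h^[n] x - x - (n : ℝ) * (h x - x)
      = ∑ m ∈ Finset.range n, ((h^[m+1] x - h^[m] x) - (h x - x)) := by
    rw [Finset.sum_sub_distrib, ← tel, Finset.sum_const, Finset.card_range, nsmul_eq_mul]
  rw [hsum]
  have hDnn : (0:ℝ) ≤ |h x - x| := abs_nonneg _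
  calc |∑ m ∈ Finset.range n, ((h^[m+1] x - h^[m] x) - (h x - x))|
      ≤ ∑ m ∈ Finset.range n, |(h^[m+1] x - h^[m] x) - (h x - x)| :=
        Finset.abs_sum_le_sum_abs _ _
    _ ≤ ∑ m ∈ Finset.range n, ((n:ℝ) * δ * ((1 + δ) ^ n * |h x - x|)) := by
        refine Finset.sum_le_sum fun m hm => ?_
        have hmn : m ≤ n := (Finset.mem_range.mp hm).le
        have h1 := udiff m hmn
        have h2 : (m:ℝ) ≤ n := by exact_mod_cast hmn
        have h3 : (0:ℝ) ≤ δ * ((1 + δ) ^ n * |h x - x|) := by positivity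
        nlinarith
    _ = (n:ℝ) * ((n:ℝ) * δ * ((1 + δ) ^ n * |h x - x|)) := by
        rw [Finset.sum_const, Finset.card_range, nsmul_eq_mul]
    _ ≤ (n:ℝ) * ((n:ℝ) * δ * (3 * |h x - x|)) := by gcongr
    _ = (3 * (n:ℝ) ^ 2 * δ) * |h x - x| := by ring
    _ ≤ ε * |h x - x| := mul_le_mul_of_nonneg_right hδε hDnn


end
end

section
/- Let I₁ be an open interval in ℝ and let I₂ be an open, relatively compact subinterval of I₁. For every integer n ≥ 1 and all positive reals C₁, C₂ there exists δ > 0 such that for every C¹-map h : I₁ → ℝ with ‖h − id‖_{1,I₁} < δ whose iterates up to order n are defined on I₂, and for arbitrary points x, y ∈ I₂ with |y − x| < C₂·|(hⁿ − id)(x)|, one has |(h − id)(y) − (h − id)(x)| < C₁·|(h − id)(x)|. -/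
open Filter Topology Set MeasureTheory Classical

noncomputable section

/-- (Lemma 3.11 of the paper.) For every `n ≥ 1` and positive `C₁, C₂`
there is `δ > 0` such that for any `C¹`-map `h` on `I₁` with `‖h - id‖₁ < δ` whose iterates
up to order `n` are defined on `I₂`, and any `x, y ∈ I₂` with `|y - x| < C₂ |(hⁿ - id)(x)|`,
one has `|(h - id)(y) - (h - id)(x)| < C₁ |(h - id)(x)|`. -/
theorem displacement_comparison
    (α β c d : ℝ) (hcd : c < d) (hI₂ : Icc c d ⊆ Ioo α β)
    (n : ℕ) (hn : 1 ≤ n) (C₁ C₂ : ℝ) (hC₁ : 0 < C₁) (hC₂ : 0 < C₂) :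
    ∃ δ : ℝ, 0 < δ ∧
      ∀ h : ℝ → ℝ, ContDiffOn ℝ 1 h (Ioo α β) →
        (∀ x ∈ Ioo α β, |h x - x| + |deriv h x - 1| < δ) →
        (∀ x ∈ Ioo c d, ∀ m : ℕ, m ≤ n → h^[m] x ∈ Ioo α β) →
        ∀ x ∈ Ioo c d, ∀ y ∈ Ioo c d, |y - x| < C₂ * |h^[n] x - x| →
          |(h y - y) - (h x - x)| < C₁ * |h x - x| := by
  have hn' : (0:ℝ) < n := by exact_mod_cast hn
  set D : ℝ := C₂ * n * 2 ^ n with hD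
  have hDpos : 0 < D := by positivity
  refine ⟨min 1 (C₁ / D), lt_min one_pos (by positivity), ?_⟩
  set δ : ℝ := min 1 (C₁ / D) with hδdef
  have hδpos : 0 < δ := lt_min one_pos (by positivity)
  have hδ1 : δ ≤ 1 := min_le_left _ _
  have hδ2 : δ * D ≤ C₁ := by
    have := min_le_right 1 (C₁ / D)
    calc δ * D ≤ (C₁ / D) * D := by nlinarith
    _ = C₁ := by field_simp
  intro h hsm hclose hiter x hx y hy hxy
  have hxI : x ∈ Ioo α β := hI₂ ⟨hx.1.le, hx.2.le⟩
  have hyI : y ∈ Ioo α β := hI₂ ⟨hy.1.le, hy.2.le⟩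
  -- Lipschitz estimate for g = h - id on the convex open interval
  have key : ∀ z ∈ Ioo α β, ∀ w ∈ Ioo α β,
      |(h w - w) - (h z - z)| ≤ δ * |w - z| := by
    intro z hz w hw
    have := (convex_Ioo α β).norm_image_sub_le_of_norm_hasDerivWithin_le
      (f := fun t => h t - t) (f' := fun t => deriv h t - 1) (C := δ)
      (fun t ht => by
        have hdt : DifferentiableAt ℝ h t :=
          (hsm.contDiffAt (isOpen_Ioo.mem_nhds ht)).differentiableAt one_ne_zero
        exact (hdt.hasDerivAt.sub (hasDerivAt_id t)).hasDerivWithinAt)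
      (fun t ht => by
        have := hclose t ht
        have h1 : (0:ℝ) ≤ |h t - t| := abs_nonneg _
        simp only [Real.norm_eq_abs]
        linarith)
      hz hw
    simpa [Real.norm_eq_abs] using this
  -- iterate displacement bound
  have iterbound : ∀ k : ℕ, k ≤ n →
      |h^[k] x - x| ≤ k * (1 + δ)^k * |h x - x| := by
    intro k hk
    induction k with
    | zero => simp
    | succ k ih =>
      have hk' : k ≤ n := Nat.le_of_succ_le hk
      have ihk := ih hk'
      have hxk : h^[k] x ∈ Ioo α β := hiter x hx k hk'
      have h1 : |(h (h^[k] x) - h^[k] x) - (h x - x)| ≤ δ * |h^[k] x - x| :=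
        key x hxI (h^[k] x) hxk
      have h2 : |h (h^[k] x) - h^[k] x| ≤ |h x - x| + δ * |h^[k] x - x| := by
        have := abs_sub_abs_le_abs_sub (h (h^[k] x) - h^[k] x) (h x - x)
        linarith
      have h3 : |h^[k+1] x - x| ≤ |h (h^[k] x) - h^[k] x| + |h^[k] x - x| := by
        rw [Function.iterate_succ_apply']
        calc |h (h^[k] x) - x| = |(h (h^[k] x) - h^[k] x) + (h^[k] x - x)| := by ring_nf
        _ ≤ _ := abs_add_le _ _
      have hpow : (1:ℝ) ≤ (1 + δ)^k := one_le_pow₀ (by linarith)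
      have hpow' : (1 + δ)^(k+1) = (1 + δ) * (1 + δ)^k := by ring
      have hgx : (0:ℝ) ≤ |h x - x| := abs_nonneg _
      have hak : (0:ℝ) ≤ |h^[k] x - x| := abs_nonneg _
      have hkk : (0:ℝ) ≤ (k:ℝ) := Nat.cast_nonneg k
      push_cast
      rw [hpow']
      nlinarith [mul_le_mul_of_nonneg_left ihk (show (0:ℝ) ≤ 1 + δ by linarith),
        mul_le_mul_of_nonneg_right
          (show (1:ℝ) ≤ (1 + δ) * (1 + δ)^k by nlinarith) hgx]
  -- conclusion
  have hgx : (0:ℝ) ≤ |h x - x| := abs_nonneg _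
  have hpown : (1 + δ)^n ≤ 2^n := pow_le_pow_left₀ (by linarith) (by linarith) n
  have hbn := iterbound n le_rfl
  have main : |(h y - y) - (h x - x)| ≤ δ * |y - x| := key x hxI y hyI
  have step1 : δ * |y - x| < δ * (C₂ * |h^[n] x - x|) :=
    mul_lt_mul_of_pos_left hxy hδpos
  have step2 : δ * (C₂ * |h^[n] x - x|) ≤ δ * (C₂ * (n * (1 + δ)^n * |h x - x|)) := by
    have := mul_le_mul_of_nonneg_left hbn hC₂.le
    nlinarith
  have step3 : δ * (C₂ * (n * (1 + δ)^n * |h x - x|)) ≤ C₁ * |h x - x| := by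
    have h4 : δ * (C₂ * ((n:ℝ) * (1 + δ)^n)) ≤ δ * D := by
      rw [hD]
      have hc : (0:ℝ) ≤ C₂ * n := by positivity
      nlinarith [mul_le_mul_of_nonneg_left (mul_le_mul_of_nonneg_left hpown hc) hδpos.le]
    calc δ * (C₂ * (n * (1 + δ)^n * |h x - x|))
        = (δ * (C₂ * ((n:ℝ) * (1 + δ)^n))) * |h x - x| := by ring
      _ ≤ (δ * D) * |h x - x| := mul_le_mul_of_nonneg_right h4 hgx
      _ ≤ C₁ * |h x - x| := mul_le_mul_of_nonneg_right hδ2 hgx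
  linarith


end
end

section
/- Let 0 < λ < 1 and let I₁ be an open interval in ℝ containing [−1, 1]. For every integer n ≥ 1 there exists a positive real number δ(n) > 0 with (n+1)·δ(n) < 1 − λ such that for every C¹-map h : I₁ → ℝ with ‖h − id‖_{1,I₁} < δ(n) and h(0) > 0, there exists an integer k ≥ 1 satisfying: (1) (n+1)·|(h − id)(λᵏ)| > λᵏ(1 − λ); (2) n·|(h − id)(λᵏ)| < λ^{k−1}(1 − λ); (3) |(h − id)(y) − (h − id)(λᵏ)| < (1/4)·|(h − id)(λᵏ)| for every point y ∈ I₁ with |y − λᵏ| < λ^{k−1}(1 − λ). -/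
open Filter Topology Set MeasureTheory Classical

noncomputable section

set_option maxHeartbeats 1600000 in
/-- (Lemma 3.12 of the paper.) For every `n ≥ 1` there is `δ(n) > 0` with
`(n+1) δ(n) < 1 - λ` such that every `C¹`-map `h` on `I₁ ⊇ [-1,1]` with `‖h - id‖₁ < δ(n)` and
`h(0) > 0` admits `k ≥ 1` with the displacement of `h` at `λᵏ` comparable to `λᵏ(1-λ)` and
almost constant on the `λ^{k-1}(1-λ)`-neighborhood of `λᵏ`. -/
theorem exists_good_scale
    (lam : ℝ) (hlam0 : 0 < lam) (hlam1 : lam < 1)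
    (α β : ℝ) (hI : Icc (-1 : ℝ) 1 ⊆ Ioo α β)
    (n : ℕ) (hn : 1 ≤ n) :
    ∃ δ : ℝ, 0 < δ ∧ ((n : ℝ) + 1) * δ < 1 - lam ∧
      ∀ h : ℝ → ℝ, ContDiffOn ℝ 1 h (Ioo α β) →
        (∀ x ∈ Ioo α β, |h x - x| + |deriv h x - 1| < δ) →
        0 < h 0 →
        ∃ k : ℕ, 1 ≤ k ∧
          ((n : ℝ) + 1) * |h (lam ^ k) - lam ^ k| > lam ^ k * (1 - lam) ∧
          (n : ℝ) * |h (lam ^ k) - lam ^ k| < lam ^ (k - 1) * (1 - lam) ∧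
          ∀ y ∈ Ioo α β, |y - lam ^ k| < lam ^ (k - 1) * (1 - lam) →
            |(h y - y) - (h (lam ^ k) - lam ^ k)| <
              (1 / 4) * |h (lam ^ k) - lam ^ k| := by
  have hn1 : (0:ℝ) < (n:ℝ) + 1 := by positivity
  have hnR : (1:ℝ) ≤ (n:ℝ) := by exact_mod_cast hn
  have h1l : (0:ℝ) < 1 - lam := by linarith
  set δ : ℝ := min ((1-lam)/(2*((n:ℝ)+1)))
      (min (1/(2*(n:ℝ)*((n:ℝ)+1))) (lam/(4*((n:ℝ)+1)))) with hδdef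
  have hδpos : 0 < δ := by
    have h1 : 0 < (1-lam)/(2*((n:ℝ)+1)) := by positivity
    have h2 : 0 < 1/(2*(n:ℝ)*((n:ℝ)+1)) := by positivity
    have h3 : 0 < lam/(4*((n:ℝ)+1)) := by positivity
    exact lt_min h1 (lt_min h2 h3)
  have hδa : δ ≤ (1-lam)/(2*((n:ℝ)+1)) := min_le_left _ _
  have hδb : δ ≤ 1/(2*(n:ℝ)*((n:ℝ)+1)) := (min_le_right _ _).trans (min_le_left _ _)
  have hδc : δ ≤ lam/(4*((n:ℝ)+1)) := (min_le_right _ _).trans (min_le_right _ _)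
  have hδa' : ((n:ℝ)+1) * δ ≤ (1-lam)/2 := by
    rw [le_div_iff₀ (by positivity)] at hδa
    nlinarith
  have hδb' : δ * (2*(n:ℝ)*((n:ℝ)+1)) ≤ 1 := by
    rw [le_div_iff₀ (by positivity)] at hδb; linarith
  have hδc' : δ * (4*((n:ℝ)+1)) ≤ lam := by
    rw [le_div_iff₀ (by positivity)] at hδc; linarith
  refine ⟨δ, hδpos, by linarith, ?_⟩
  intro h hC hsm h0
  have hmem : ∀ k : ℕ, lam ^ k ∈ Ioo α β := fun k =>
    hI ⟨by nlinarith [pow_pos hlam0 k], pow_le_one₀ hlam0.le hlam1.le⟩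
  have h0mem : (0:ℝ) ∈ Ioo α β := hI ⟨by norm_num, by norm_num⟩
  have hdiff : ∀ x ∈ Ioo α β, DifferentiableAt ℝ h x := fun x hx =>
    (hC.differentiableOn one_ne_zero).differentiableAt (isOpen_Ioo.mem_nhds hx)
  have hgdiff : ∀ x ∈ Ioo α β, DifferentiableAt ℝ (fun x => h x - x) x := fun x hx =>
    (hdiff x hx).sub differentiableAt_id
  have hgderiv : ∀ x ∈ Ioo α β, ‖deriv (fun x => h x - x) x‖ ≤ δ := by
    intro x hx
    rw [deriv_fun_sub (hdiff x hx) differentiableAt_fun_id, deriv_id'', Real.norm_eq_abs]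
    have h1 := hsm x hx
    have h2 := abs_nonneg (h x - x)
    linarith
  have hlip : ∀ x ∈ Ioo α β, ∀ y ∈ Ioo α β,
      |(h y - y) - (h x - x)| ≤ δ * |y - x| := by
    intro x hx y hy
    have := Convex.norm_image_sub_le_of_norm_deriv_le hgdiff hgderiv (convex_Ioo α β) hx hy
    simpa [Real.norm_eq_abs] using this
  have habs : ∀ x ∈ Ioo α β, |h x - x| < δ := by
    intro x hx
    have h1 := hsm x hx
    have h2 := abs_nonneg (deriv h x - 1)
    linarith
  -- existence of some k with property P
  have htend : Tendsto (fun k : ℕ => lam ^ k) atTop (𝓝 0) :=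
    tendsto_pow_atTop_nhds_zero_of_lt_one hlam0.le hlam1
  have hcont : ContinuousAt (fun x => h x - x) 0 := (hgdiff 0 h0mem).continuousAt
  have hg0 : Tendsto (fun kk : ℕ => h (lam ^ kk) - lam ^ kk) atTop (𝓝 (h 0 - 0)) :=
    hcont.tendsto.comp htend
  have hEx : ∃ kk : ℕ, lam ^ kk * (1 - lam) < ((n:ℝ)+1) * |h (lam ^ kk) - lam ^ kk| := by
    have h1 : Tendsto (fun kk : ℕ =>
        ((n:ℝ)+1) * |h (lam ^ kk) - lam ^ kk| - lam ^ kk * (1-lam)) atTop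
        (𝓝 (((n:ℝ)+1) * |h 0 - 0| - 0 * (1-lam))) :=
      (tendsto_const_nhds.mul hg0.abs).sub (htend.mul tendsto_const_nhds)
    have hpos : (0:ℝ) < ((n:ℝ)+1) * |h 0 - 0| - 0 * (1-lam) := by
      rw [sub_zero, abs_of_pos h0]
      nlinarith
    have h2 := h1.eventually (eventually_gt_nhds hpos)
    obtain ⟨kk, hkk⟩ := h2.exists
    exact ⟨kk, by linarith⟩
  classical
  let k := Nat.find hEx
  have hPk : lam ^ k * (1 - lam) < ((n:ℝ)+1) * |h (lam ^ k) - lam ^ k| := Nat.find_spec hEx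
  have hk0 : k ≠ 0 := by
    intro hk
    have := hPk
    rw [hk, pow_zero] at this
    have h1 : |h 1 - 1| < δ := habs 1 (hI ⟨by norm_num, le_rfl⟩)
    nlinarith
  obtain ⟨m, hm⟩ : ∃ m, k = m + 1 := ⟨k - 1, (Nat.succ_pred_eq_of_pos (Nat.pos_of_ne_zero hk0)).symm⟩
  have hPm : ¬ (lam ^ m * (1 - lam) < ((n:ℝ)+1) * |h (lam ^ m) - lam ^ m|) :=
    Nat.find_min hEx (by omega)
  push_neg at hPm
  rw [hm] at hPk
  have hLpos : 0 < lam ^ m * (1 - lam) := by positivity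
  -- step estimate
  have hstep : |(h (lam ^ (m+1)) - lam ^ (m+1)) - (h (lam ^ m) - lam ^ m)| ≤
      δ * (lam ^ m * (1 - lam)) := by
    have h1 := hlip (lam ^ m) (hmem m) (lam ^ (m+1)) (hmem (m+1))
    have h2 : |lam ^ (m+1) - lam ^ m| = lam ^ m * (1 - lam) := by
      rw [abs_of_nonpos (by nlinarith [pow_pos hlam0 m, pow_succ lam m])]
      rw [pow_succ]; ring
    rw [h2] at h1; exact h1
  refine ⟨m + 1, le_add_self, hPk, ?_, ?_⟩
  · -- upper bound
    simp only [Nat.add_sub_cancel]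
    have htri : |h (lam ^ (m+1)) - lam ^ (m+1)| ≤
        |h (lam ^ m) - lam ^ m| + δ * (lam ^ m * (1 - lam)) := by
      have := abs_sub_abs_le_abs_sub (h (lam ^ (m+1)) - lam ^ (m+1)) (h (lam ^ m) - lam ^ m)
      linarith
    have e1 := mul_le_mul_of_nonneg_right hδb' hLpos.le
    have e2 := mul_le_mul_of_nonneg_left hPm (by positivity : (0:ℝ) ≤ (n:ℝ))
    have e3 := mul_le_mul_of_nonneg_left htri (by positivity : (0:ℝ) ≤ (n:ℝ)*((n:ℝ)+1))
    have e5 : ((n:ℝ)+1) * ((n:ℝ) * |h (lam ^ (m+1)) - lam ^ (m+1)|) < ((n:ℝ)+1) * (lam ^ m * (1 - lam)) := by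
      nlinarith [hLpos]
    exact lt_of_mul_lt_mul_left e5 hn1.le
  · -- flatness
    simp only [Nat.add_sub_cancel]
    intro y hy hclose
    have h1 := hlip (lam ^ (m+1)) (hmem (m+1)) y hy
    have h2 : δ * |y - lam ^ (m+1)| < δ * (lam ^ m * (1 - lam)) :=
      mul_lt_mul_of_pos_left hclose hδpos
    have e1 := mul_le_mul_of_nonneg_right hδc' hLpos.le
    have e2 : lam * (lam ^ m * (1 - lam)) < ((n:ℝ)+1) * |h (lam ^ (m+1)) - lam ^ (m+1)| := by
      have h3 : lam * (lam ^ m * (1 - lam)) = lam ^ (m+1) * (1 - lam) := by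
        rw [pow_succ]; ring
      rw [h3]; exact hPk
    have e3 : |(h y - y) - (h (lam ^ (m+1)) - lam ^ (m+1))| < δ * (lam ^ m * (1 - lam)) :=
      lt_of_le_of_lt h1 h2
    have e4 := mul_lt_mul_of_pos_left e3 hn1
    have e5 : ((n:ℝ)+1) * |(h y - y) - (h (lam ^ (m+1)) - lam ^ (m+1))| <
        ((n:ℝ)+1) * ((1/4) * |h (lam ^ (m+1)) - lam ^ (m+1)|) := by nlinarith []
    exact lt_of_mul_lt_mul_left e5 hn1.le


end
end

section
/- Let 0 < λ < 1, let I₁ be an open interval in ℝ containing [−1, 1], let n ≥ 1 be an integer and let δ > 0 satisfy (n+1)·δ < 1 − λ. Let h : I₁ → ℝ be a C¹-map with ‖h − id‖_{1,I₁} < δ and h(0) > 0, and let k ≥ 1 be an integer such that: (n+1)·|(h − id)(λᵏ)| > λᵏ(1 − λ); n·|(h − id)(λᵏ)| < λ^{k−1}(1 − λ); and |(h − id)(y) − (h − id)(λᵏ)| < (1/4)·|(h − id)(λᵏ)| for every y ∈ I₁ with |y − λᵏ| < λ^{k−1}(1 − λ). Set λ′ = max{0, 2λ − 1}, I = [λ′,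 λ], and define g(x) = λ^{−k+1}·h(λ^{k−1} x) for x ∈ I. Then for every x ∈ I: (3/8)·λ(1 − λ) ≤ n·|(g − id)(x)| ≤ (5/4)·(1 − λ), and n·|(g − id)′(x)| < 1 − λ. -/
open Filter Topology Set MeasureTheory Classical

noncomputable section

set_option maxHeartbeats 2000000 in
/-- (Lemma 3.13 of the paper.) Under the conclusions of Lemma 3.12 for
`h` and the scale `k`, the conjugate `g(x) = λ^{-k+1} h(λ^{k-1} x)` satisfies
`(3/8) λ(1-λ) ≤ n |(g - id)(x)| ≤ (5/4)(1-λ)` and `n |(g - id)'(x)| < 1 - λ` on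
`I = [max{0, 2λ-1}, λ]`. -/
theorem conjugate_displacement_bounds
    (lam : ℝ) (hlam0 : 0 < lam) (hlam1 : lam < 1)
    (α β : ℝ) (hI : Icc (-1 : ℝ) 1 ⊆ Ioo α β)
    (n : ℕ) (hn : 1 ≤ n) (δ : ℝ) (hδ : 0 < δ) (hδ' : ((n : ℝ) + 1) * δ < 1 - lam)
    (h : ℝ → ℝ) (hC1 : ContDiffOn ℝ 1 h (Ioo α β))
    (hnorm : ∀ x ∈ Ioo α β, |h x - x| + |deriv h x - 1| < δ)
    (hpos : 0 < h 0)
    (k : ℕ) (hk : 1 ≤ k)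
    (h16 : ((n : ℝ) + 1) * |h (lam ^ k) - lam ^ k| > lam ^ k * (1 - lam))
    (h17 : (n : ℝ) * |h (lam ^ k) - lam ^ k| < lam ^ (k - 1) * (1 - lam))
    (h18 : ∀ y ∈ Ioo α β, |y - lam ^ k| < lam ^ (k - 1) * (1 - lam) →
      |(h y - y) - (h (lam ^ k) - lam ^ k)| < (1 / 4) * |h (lam ^ k) - lam ^ k|) :
    ∀ x ∈ Icc (max 0 (2 * lam - 1)) lam,
      (3 / 8) * (lam * (1 - lam)) ≤
          (n : ℝ) * |(lam ^ (k - 1))⁻¹ * h (lam ^ (k - 1) * x) - x| ∧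
      (n : ℝ) * |(lam ^ (k - 1))⁻¹ * h (lam ^ (k - 1) * x) - x| ≤ (5 / 4) * (1 - lam) ∧
      (n : ℝ) * |deriv (fun y => (lam ^ (k - 1))⁻¹ * h (lam ^ (k - 1) * y) - y) x|
        < 1 - lam := by
  intro x hx
  obtain ⟨hxl, hxr⟩ := hx
  have hx0 : 0 ≤ x := le_trans (le_max_left _ _) hxl
  have hx2l : 2 * lam - 1 ≤ x := le_trans (le_max_right _ _) hxl
  have hn1 : (1 : ℝ) ≤ (n : ℝ) := by exact_mod_cast hn
  set μ := lam ^ (k - 1) with hμdef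
  have hμpos : 0 < μ := pow_pos hlam0 _
  have hμle1 : μ ≤ 1 := pow_le_one₀ hlam0.le hlam1.le
  have hlk : lam ^ k = μ * lam := by
    rw [hμdef, ← pow_succ]
    congr 1
    omega
  set c := h (lam ^ k) - lam ^ k with hcdef
  set A := |c| with hAdef
  have h1l : 0 < 1 - lam := by linarith
  have h16' : μ * lam * (1 - lam) < ((n : ℝ) + 1) * A := by rw [← hlk]; exact h16
  have h17' : (n : ℝ) * A < μ * (1 - lam) := h17
  have hApos : 0 < A := by
    nlinarith [mul_pos (mul_pos hμpos hlam0) h1l, abs_nonneg c,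
      (Nat.cast_nonneg n : (0 : ℝ) ≤ (n : ℝ))]
  have hymem : μ * x ∈ Ioo α β := by
    apply hI
    constructor
    · nlinarith [mul_nonneg hμpos.le hx0]
    · nlinarith [mul_nonneg hμpos.le hx0, mul_le_mul_of_nonneg_left hxr hμpos.le,
        mul_nonneg hμpos.le h1l.le]
  have hdist : |μ * x - lam ^ k| ≤ μ * (1 - lam) := by
    rw [hlk, abs_sub_comm,
      abs_of_nonneg (by nlinarith [mul_le_mul_of_nonneg_left hxr hμpos.le] :
        (0 : ℝ) ≤ μ * lam - μ * x)]
    nlinarith [mul_le_mul_of_nonneg_left hx2l hμpos.le]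
  have hcy : ContinuousAt h (μ * x) :=
    hC1.continuousOn.continuousAt (isOpen_Ioo.mem_nhds hymem)
  have hD : |(h (μ * x) - μ * x) - c| ≤ (1 / 4) * A := by
    set y := μ * x with hydef
    have hmem1 : ∀ t ∈ Ico (0 : ℝ) 1, (lam ^ k + t * (y - lam ^ k)) ∈ Ioo α β ∧
        |(lam ^ k + t * (y - lam ^ k)) - lam ^ k| < μ * (1 - lam) := by
      rintro t ⟨ht0, ht1⟩
      have habs : |t * (y - lam ^ k)| < μ * (1 - lam) := by
        rw [abs_mul, abs_of_nonneg ht0]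
        calc t * |y - lam ^ k| ≤ t * (μ * (1 - lam)) :=
              mul_le_mul_of_nonneg_left hdist ht0
          _ < 1 * (μ * (1 - lam)) :=
              mul_lt_mul_of_pos_right ht1 (mul_pos hμpos h1l)
          _ = μ * (1 - lam) := one_mul _
      have h2 := abs_lt.mp habs
      refine ⟨hI ⟨?_, ?_⟩, ?_⟩
      · nlinarith [h2.1, hlk, mul_nonneg hμpos.le hlam0.le, hμle1]
      · nlinarith [h2.2, hlk, hμle1]
      · have : lam ^ k + t * (y - lam ^ k) - lam ^ k = t * (y - lam ^ k) := by ring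
        rw [this]
        exact habs
    haveI hNB : (𝓝[Ico (0 : ℝ) 1] (1 : ℝ)).NeBot := by
      refine mem_closure_iff_nhdsWithin_neBot.mp ?_
      rw [closure_Ico (by norm_num : (0 : ℝ) ≠ 1)]
      exact ⟨by norm_num, le_refl 1⟩
    have key : lam ^ k + 1 * (y - lam ^ k) = y := by ring
    have hcy' : ContinuousAt h (lam ^ k + 1 * (y - lam ^ k)) := by rw [key]; exact hcy
    have hct : ContinuousAt
        (fun t : ℝ => |(h (lam ^ k + t * (y - lam ^ k)) - (lam ^ k + t * (y - lam ^ k))) - c|)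
        1 := by
      apply ContinuousAt.abs
      have hinner : ContinuousAt (fun t : ℝ => lam ^ k + t * (y - lam ^ k)) 1 := by fun_prop
      have hcomp : ContinuousAt (fun t : ℝ => h (lam ^ k + t * (y - lam ^ k))) 1 :=
        ContinuousAt.comp (f := fun t : ℝ => lam ^ k + t * (y - lam ^ k)) (x := 1) hcy' hinner
      exact ContinuousAt.sub (ContinuousAt.sub hcomp hinner) continuousAt_const
    have hct' : Tendsto
        (fun t : ℝ => |(h (lam ^ k + t * (y - lam ^ k)) - (lam ^ k + t * (y - lam ^ k))) - c|)
        (𝓝[Ico (0 : ℝ) 1] 1) (𝓝 (|(h y - y) - c|)) := by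
      have e : |(h y - y) - c| =
          |(h (lam ^ k + 1 * (y - lam ^ k)) - (lam ^ k + 1 * (y - lam ^ k))) - c| := by
        rw [key]
      rw [e]
      exact hct.continuousWithinAt
    have hev : ∀ᶠ t in 𝓝[Ico (0 : ℝ) 1] (1 : ℝ),
        |(h (lam ^ k + t * (y - lam ^ k)) - (lam ^ k + t * (y - lam ^ k))) - c|
          ≤ (1 / 4) * A := by
      filter_upwards [self_mem_nhdsWithin] with t ht
      obtain ⟨hmem, hlt⟩ := hmem1 t ht
      exact (h18 _ hmem hlt).le
    exact le_of_tendsto hct' hev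
  set D := h (μ * x) - μ * x with hDdef
  have hDge : (3 / 4) * A ≤ |D| := by
    have h1 := abs_sub_abs_le_abs_sub c D
    have h2 : |c - D| = |D - c| := abs_sub_comm c D
    linarith
  have hDle : |D| ≤ (5 / 4) * A := by
    have h1 := abs_sub_abs_le_abs_sub D c
    linarith
  have hrw : μ⁻¹ * h (μ * x) - x = μ⁻¹ * D := by
    rw [hDdef]
    field_simp
  have habs : |μ⁻¹ * h (μ * x) - x| = μ⁻¹ * |D| := by
    rw [hrw, abs_mul, abs_of_pos (inv_pos.mpr hμpos)]
  refine ⟨?_, ?_, ?_⟩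
  · rw [habs]
    have hmain : (3 / 8) * (lam * (1 - lam)) * μ ≤ (n : ℝ) * |D| := by
      nlinarith [mul_le_mul_of_nonneg_left hDge (Nat.cast_nonneg n : (0 : ℝ) ≤ (n : ℝ)),
        h16', hApos, mul_nonneg (sub_nonneg.mpr hn1) hApos.le]
    calc (3 / 8) * (lam * (1 - lam)) = ((3 / 8) * (lam * (1 - lam)) * μ) * μ⁻¹ := by
          field_simp
      _ ≤ ((n : ℝ) * |D|) * μ⁻¹ :=
          mul_le_mul_of_nonneg_right hmain (inv_nonneg.mpr hμpos.le)
      _ = (n : ℝ) * (μ⁻¹ * |D|) := by ring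
  · rw [habs]
    have hmain : (n : ℝ) * |D| ≤ (5 / 4) * (1 - lam) * μ := by
      nlinarith [mul_le_mul_of_nonneg_left hDle (Nat.cast_nonneg n : (0 : ℝ) ≤ (n : ℝ)),
        h17', hApos]
    calc (n : ℝ) * (μ⁻¹ * |D|) = ((n : ℝ) * |D|) * μ⁻¹ := by ring
      _ ≤ ((5 / 4) * (1 - lam) * μ) * μ⁻¹ :=
          mul_le_mul_of_nonneg_right hmain (inv_nonneg.mpr hμpos.le)
      _ = (5 / 4) * (1 - lam) := by
          field_simp
  · have hdiff : DifferentiableAt ℝ h (μ * x) :=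
      (hC1.differentiableOn one_ne_zero).differentiableAt (isOpen_Ioo.mem_nhds hymem)
    have h1 : HasDerivAt (fun y : ℝ => μ * y) μ x := by
      simpa using (hasDerivAt_id x).const_mul μ
    have h2 : HasDerivAt (fun y : ℝ => h (μ * y)) (deriv h (μ * x) * μ) x :=
      HasDerivAt.comp x hdiff.hasDerivAt h1
    have h3 : HasDerivAt (fun y : ℝ => μ⁻¹ * h (μ * y) - y)
        (μ⁻¹ * (deriv h (μ * x) * μ) - 1) x := (h2.const_mul μ⁻¹).sub (hasDerivAt_id x)
    have heq : μ⁻¹ * (deriv h (μ * x) * μ) - 1 = deriv h (μ * x) - 1 := by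
      field_simp
    rw [heq] at h3
    rw [h3.deriv]
    have hd := hnorm (μ * x) hymem
    have h4 : |deriv h (μ * x) - 1| < δ := by
      have := abs_nonneg (h (μ * x) - μ * x)
      linarith
    nlinarith [mul_lt_mul_of_pos_left h4 (by linarith : (0 : ℝ) < (n : ℝ)), hδ, hδ']

end
end
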